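/- arXiv:1908.09821 — 4 statements merged into one kernel-verified Lean document; each statement's English description precedes it below -/
import Mathlib

section
/- Let λ be a weak composition of n, h a Hessenberg function with h(i) < i for all i. Suppose V_• = uwE_• ∈ C_w lies in the Springer fiber B^{X_λ} with uw = u_i v u_0 y (the factorization via Lemma on Schubert cells, u_i ∈ U_i for i = w(n), u_0 ∈ U^y). Then the entry u_{ij} of u_i is zero unless j labels a box at the end of a row in the base filling R(e) of λ. Equivalently: if e_j ∈ im(X_λ) and j > i, then u_{ij} = 0. -/
open Matrix

attribute [local instance] Classical.propDecidable

noncomputable section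

/-- Label of the box in row `i` (0-indexed from the top), column `j` (0-indexed) of the base
filling of the weak composition `lam`: columns filled left to right, each column bottom to top,
labels `1,…,n`. -/
def baseLabel (lam : List ℕ) (i j : ℕ) : ℕ :=
  (∑ i' ∈ Finset.range lam.length, min (lam.getD i' 0) j) +
    ((Finset.Ico i lam.length).filter (fun i' => j < lam.getD i' 0)).card

def IsBox (lam : List ℕ) (i j : ℕ) : Prop :=
  i < lam.length ∧ j < lam.getD i 0

/-- The nilpotent matrix `X_λ = Σ E_{ℓ r}` over pairs where the box labeled `r` is directly right
of the box labeled `ℓ` in the base filling (labels are 1-indexed; matrix indices 0-indexed). -/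

lemma sum_getD (l : List ℕ) : ∑ i ∈ Finset.range l.length, l.getD i 0 = l.sum := by
  induction l with
  | nil => simp
  | cons a t ih =>
    rw [List.length_cons, Finset.sum_range_succ']
    simp only [List.getD_cons_succ, List.getD_cons_zero, List.sum_cons, ih]
    omega

lemma A_succ (lam : List ℕ) (j : ℕ) :
    (∑ i' ∈ Finset.range lam.length, min (lam.getD i' 0) (j+1)) =
    (∑ i' ∈ Finset.range lam.length, min (lam.getD i' 0) j) +
      ((Finset.range lam.length).filter (fun i' => j < lam.getD i' 0)).card := by
  rw [Finset.card_filter, ← Finset.sum_add_distrib]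
  apply Finset.sum_congr rfl
  intro i _
  simp only [Nat.min_def]
  split_ifs <;> omega

lemma A_mono (lam : List ℕ) {j j' : ℕ} (h : j ≤ j') :
    (∑ i' ∈ Finset.range lam.length, min (lam.getD i' 0) j) ≤
    (∑ i' ∈ Finset.range lam.length, min (lam.getD i' 0) j') :=
  Finset.sum_le_sum fun i _ => min_le_min le_rfl h

lemma baseLabel_le (lam : List ℕ) {i j : ℕ} (hb : IsBox lam i j) :
    1 ≤ baseLabel lam i j ∧ baseLabel lam i j ≤ lam.sum := by
  obtain ⟨hi, hj⟩ := hb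
  constructor
  · have : i ∈ (Finset.Ico i lam.length).filter (fun i' => j < lam.getD i' 0) := by
      simp only [Finset.mem_filter, Finset.mem_Ico]; exact ⟨⟨le_rfl, hi⟩, hj⟩
    have := Finset.card_pos.mpr ⟨i, this⟩
    unfold baseLabel; omega
  · unfold baseLabel
    have h1 : ((Finset.Ico i lam.length).filter (fun i' => j < lam.getD i' 0)).card ≤
        ((Finset.range lam.length).filter (fun i' => j < lam.getD i' 0)).card := by
      apply Finset.card_le_card
      apply Finset.filter_subset_filter
      intro x hx; simp at hx ⊢; omega
    have h2 := A_succ lam j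
    have h3 : (∑ i' ∈ Finset.range lam.length, min (lam.getD i' 0) (j+1)) ≤ lam.sum := by
      rw [← sum_getD]
      exact Finset.sum_le_sum fun i _ => min_le_left _ _
    omega

lemma baseLabel_inj (lam : List ℕ) {i j i' j' : ℕ} (hb : IsBox lam i j) (hb' : IsBox lam i' j')
    (he : baseLabel lam i j = baseLabel lam i' j') : i = i' ∧ j = j' := by
  -- first show j = j'
  have key : ∀ a b a' b', IsBox lam a b → IsBox lam a' b' → b < b' →
      baseLabel lam a b < baseLabel lam a' b' := by
    intro a b a' b' ⟨ha, hab⟩ ⟨ha', hab'⟩ hbb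
    have h1 : baseLabel lam a b ≤ ∑ i' ∈ Finset.range lam.length, min (lam.getD i' 0) (b+1) := by
      rw [A_succ]
      unfold baseLabel
      have : ((Finset.Ico a lam.length).filter (fun i' => b < lam.getD i' 0)).card ≤
          ((Finset.range lam.length).filter (fun i' => b < lam.getD i' 0)).card := by
        apply Finset.card_le_card; apply Finset.filter_subset_filter
        intro x hx; simp at hx ⊢; omega
      omega
    have h2 : (∑ i' ∈ Finset.range lam.length, min (lam.getD i' 0) (b+1)) ≤
        (∑ i' ∈ Finset.range lam.length, min (lam.getD i' 0) b') := A_mono lam hbb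
    have h3 : 1 ≤ ((Finset.Ico a' lam.length).filter (fun i' => b' < lam.getD i' 0)).card :=
      Finset.card_pos.mpr ⟨a', by
        simp only [Finset.mem_filter, Finset.mem_Ico]; exact ⟨⟨le_rfl, ha'⟩, hab'⟩⟩
    unfold baseLabel
    unfold baseLabel at h1
    omega
  have hjj : j = j' := by
    rcases Nat.lt_trichotomy j j' with h | h | h
    · exact absurd he (Nat.ne_of_lt (key _ _ _ _ hb hb' h))
    · exact h
    · exact absurd he.symm (Nat.ne_of_lt (key _ _ _ _ hb' hb h))
  subst hjj
  refine ⟨?_, rfl⟩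
  -- now i = i'
  have key2 : ∀ a a', IsBox lam a j → IsBox lam a' j → a < a' →
      baseLabel lam a' j < baseLabel lam a j := by
    intro a a' ⟨ha, haj⟩ ⟨ha', haj'⟩ haa
    unfold baseLabel
    have : ((Finset.Ico a' lam.length).filter (fun i' => j < lam.getD i' 0)) ⊂
        ((Finset.Ico a lam.length).filter (fun i' => j < lam.getD i' 0)) := by
      constructor
      · apply Finset.filter_subset_filter
        intro x hx; simp at hx ⊢; omega
      · intro hsub
        have : a ∈ (Finset.Ico a' lam.length).filter (fun i' => j < lam.getD i' 0) :=
          hsub (by simp only [Finset.mem_filter, Finset.mem_Ico]; exact ⟨⟨le_rfl, ha⟩, haj⟩)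
        simp at this; omega
    have := Finset.card_lt_card this
    omega
  rcases Nat.lt_trichotomy i i' with h | h | h
  · exact absurd he.symm (Nat.ne_of_lt (key2 _ _ hb hb' h))
  · exact h
  · exact absurd he (Nat.ne_of_lt (key2 _ _ hb' hb h))

lemma baseLabel_surj (lam : List ℕ) {m : ℕ} (h1 : 1 ≤ m) (h2 : m ≤ lam.sum) :
    ∃ i j, IsBox lam i j ∧ baseLabel lam i j = m := by
  classical
  set B : Finset ((_ : ℕ) × ℕ) :=
    (Finset.range lam.length).sigma (fun i => Finset.range (lam.getD i 0)) with hB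
  have hcard : B.card = lam.sum := by
    rw [hB, Finset.card_sigma]
    simp only [Finset.card_range]
    exact sum_getD lam
  have hmem : ∀ p : (_ : ℕ) × ℕ, p ∈ B ↔ IsBox lam p.1 p.2 := by
    intro p
    rw [hB, Finset.mem_sigma, Finset.mem_range, Finset.mem_range]
    exact Iff.rfl
  set φ : ((_ : ℕ) × ℕ) → ℕ := fun p => baseLabel lam p.1 p.2 with hφ
  have hinj : Set.InjOn φ B := by
    intro p hp q hq hpq
    obtain ⟨h1, h2⟩ := baseLabel_inj lam ((hmem p).1 hp) ((hmem q).1 hq) hpq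
    exact Sigma.ext h1 (heq_of_eq h2)
  have hsub : B.image φ ⊆ Finset.Icc 1 lam.sum := by
    intro x hx
    simp only [Finset.mem_image] at hx
    obtain ⟨p, hp, rfl⟩ := hx
    obtain ⟨l, u⟩ := baseLabel_le lam ((hmem p).1 hp)
    exact Finset.mem_Icc.mpr ⟨l, u⟩
  have heq : B.image φ = Finset.Icc 1 lam.sum := by
    apply Finset.eq_of_subset_of_card_le hsub
    rw [Finset.card_image_of_injOn hinj, hcard, Nat.card_Icc]
    omega
  have : m ∈ B.image φ := by rw [heq, Finset.mem_Icc]; omega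
  simp only [Finset.mem_image] at this
  obtain ⟨p, hp, hpm⟩ := this
  exact ⟨p.1, p.2, (hmem p).1 hp, hpm⟩

def Xlam (n : ℕ) (lam : List ℕ) : Matrix (Fin n) (Fin n) ℂ :=
  fun ℓ r => if (∃ i j, IsBox lam i (j+1) ∧ baseLabel lam i j = (ℓ : ℕ) + 1 ∧
      baseLabel lam i (j+1) = (r : ℕ) + 1) then 1 else 0

def IsFullFlag (n : ℕ) (V : ℕ → Submodule ℂ (Fin n → ℂ)) : Prop :=
  V 0 = ⊥ ∧ (∀ i, V i ≤ V (i+1)) ∧ ∀ i, i ≤ n → Module.finrank ℂ (V i) = i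

def InHess (n : ℕ) (X : Matrix (Fin n) (Fin n) ℂ) (h : ℕ → ℕ)
    (V : ℕ → Submodule ℂ (Fin n → ℂ)) : Prop :=
  ∀ i, i ≤ n → ∀ v ∈ V i, X.mulVec v ∈ V (h i)

/-- The flag `wE_•`, whose `k`-th space is spanned by `e_{w(1)},…,e_{w(k)}` (0-indexed). -/
def permFlag (n : ℕ) (w : Equiv.Perm (Fin n)) : ℕ → Submodule ℂ (Fin n → ℂ) :=
  fun k => Submodule.span ℂ {v | ∃ j : Fin n, (j : ℕ) < k ∧ v = Pi.single (w j) (1 : ℂ)}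

/-- The flag whose `k`-th space is spanned by the first `k` columns of `g`. -/
def matFlag (n : ℕ) (g : Matrix (Fin n) (Fin n) ℂ) : ℕ → Submodule ℂ (Fin n → ℂ) :=
  fun k => Submodule.span ℂ {c | ∃ j : Fin n, (j : ℕ) < k ∧ c = fun a => g a j}

def permMat (n : ℕ) (σ : Equiv.Perm (Fin n)) : Matrix (Fin n) (Fin n) ℂ :=
  fun a b => if σ b = a then 1 else 0

def invSet (n : ℕ) (w : Equiv.Perm (Fin n)) : Finset (Fin n × Fin n) :=
  Finset.univ.filter (fun p => p.2 < p.1 ∧ w p.1 < w p.2)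

def blen (n : ℕ) (w : Equiv.Perm (Fin n)) : ℕ := (invSet n w).card

open Fin.NatCast in
/-- `v = s_i s_{i+1} ⋯ s_{n-1}` (0-indexed simple transpositions `swap j (j+1)`). -/
def vPerm (n : ℕ) (i : ℕ) : Equiv.Perm (Fin (n+1)) :=
  ((List.Ico i n).map (fun j : ℕ => Equiv.swap (j : Fin (n+1)) ((j+1 : ℕ) : Fin (n+1)))).prod

/-- `R(w)` is row-strict: the entry in the box labeled `m` of the base filling is `w⁻¹(m)`,
so entry `p` (0-indexed) occupies the box whose base label is `w(p)+1`. -/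
def RowStrictT (n : ℕ) (lam : List ℕ) (w : Equiv.Perm (Fin n)) : Prop :=
  ∀ i j, IsBox lam i (j+1) → ∀ p q : Fin n,
    (w p : ℕ) + 1 = baseLabel lam i j → (w q : ℕ) + 1 = baseLabel lam i (j+1) → p < q

def HStrictT (n : ℕ) (lam : List ℕ) (h : ℕ → ℕ) (w : Equiv.Perm (Fin n)) : Prop :=
  ∀ i j, IsBox lam i (j+1) → ∀ p q : Fin n,
    (w p : ℕ) + 1 = baseLabel lam i j → (w q : ℕ) + 1 = baseLabel lam i (j+1) →
      (p : ℕ) + 1 ≤ h ((q : ℕ) + 1)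

/-- `(k,ℓ)` is a Hessenberg inversion of `R(w)` (entries 0-indexed: values are index+1). -/
def HessInvT (n : ℕ) (lam : List ℕ) (h : ℕ → ℕ) (w : Equiv.Perm (Fin n)) (k ℓ : Fin n) : Prop :=
  ℓ < k ∧ ∃ ik jk il jl : ℕ, IsBox lam ik jk ∧ IsBox lam il jl ∧
    baseLabel lam ik jk = (w k : ℕ) + 1 ∧ baseLabel lam il jl = (w ℓ : ℕ) + 1 ∧
    (jk < jl ∨ (jk = jl ∧ il < ik)) ∧
    (∀ r : Fin n, IsBox lam il (jl + 1) → (w r : ℕ) + 1 = baseLabel lam il (jl + 1) →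
      (k : ℕ) + 1 ≤ h ((r : ℕ) + 1))

/-- Springer inversions: Hessenberg inversions for `h = (0,1,…,n-1)`, i.e. `h(i) = i - 1`. -/
def SpringerInvT (n : ℕ) (lam : List ℕ) (w : Equiv.Perm (Fin n)) (k ℓ : Fin n) : Prop :=
  HessInvT n lam (fun m => m - 1) w k ℓ

/-- The box labeled `b+1` is directly right of the box labeled `a+1` in the base filling. -/
def RightNbr (lam : List ℕ) (a b : ℕ) : Prop :=
  ∃ i j, IsBox lam i (j+1) ∧ baseLabel lam i j = a + 1 ∧ baseLabel lam i (j+1) = b + 1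

/-- The box labeled `a+1` is at the end of its row in the base filling. -/
def EndOfRow (lam : List ℕ) (a : ℕ) : Prop :=
  ∃ i j, IsBox lam i j ∧ ¬ IsBox lam i (j+1) ∧ baseLabel lam i j = a + 1

def IsUpperUnip (n : ℕ) (g : Matrix (Fin n) (Fin n) ℂ) : Prop :=
  (∀ i, g i i = 1) ∧ ∀ i j : Fin n, j < i → g i j = 0

/-- `U_i`: upper unipotent matrices whose off-diagonal entries are supported in row `i`. -/
def InUi (n : ℕ) (i : Fin n) (g : Matrix (Fin n) (Fin n) ℂ) : Prop :=
  IsUpperUnip n g ∧ ∀ a b : Fin n, a ≠ b → g a b ≠ 0 → a = i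

/-- `U_0`: upper unipotent matrices of `GL_n` embedded in `GL_{n+1}` (last column trivial). -/
def InU0 (n : ℕ) (g : Matrix (Fin (n+1)) (Fin (n+1)) ℂ) : Prop :=
  IsUpperUnip (n+1) g ∧ ∀ a : Fin (n+1), a ≠ Fin.last n → g a (Fin.last n) = 0

/-- The element of `B_k(w)` with coordinates `x`: it sends `e_{w(j)} = X_λ^m e_{w(ℓ)}` to
`e_{w(j)} + x ℓ • X_λ^m e_{w(k)}` for Springer inversions `(k,ℓ)`, fixing all other `e_{w(j)}`. -/
def BkMat (n : ℕ) (lam : List ℕ) (w : Equiv.Perm (Fin n)) (k : Fin n) (x : Fin n → ℂ) :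
    Matrix (Fin n) (Fin n) ℂ :=
  1 + ∑ ℓ : Fin n, if SpringerInvT n lam w k ℓ then
      x ℓ • (∑ m ∈ Finset.range n,
        (Xlam n lam) ^ m * Matrix.single (w k) (w ℓ) (1 : ℂ) * ((Xlam n lam)ᵀ) ^ m)
    else 0

/-- The product `g_n g_{n-1} ⋯ g_2` of elements `g_k ∈ B_k(w)` with coordinates `x k`. -/
def bigB (n : ℕ) (lam : List ℕ) (w : Equiv.Perm (Fin n)) (x : Fin n → Fin n → ℂ) :
    Matrix (Fin n) (Fin n) ℂ :=
  ((List.ofFn (fun k : Fin n => BkMat n lam w k (x k))).reverse).prod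

/- Abstract fillings `T : row → column → value` of the diagram of `lam`, values in `[1, n]`. -/

def RowStrictF (lam : List ℕ) (T : ℕ → ℕ → ℕ) : Prop :=
  ∀ i j, IsBox lam i (j+1) → T i j < T i (j+1)

def HStrictF (lam : List ℕ) (h : ℕ → ℕ) (T : ℕ → ℕ → ℕ) : Prop :=
  ∀ i j, IsBox lam i (j+1) → T i j ≤ h (T i (j+1))

def GoodFilling (lam : List ℕ) (T : ℕ → ℕ → ℕ) : Prop :=
  (∀ i j, IsBox lam i j → 1 ≤ T i j ∧ T i j ≤ lam.sum) ∧
  (∀ m, 1 ≤ m → m ≤ lam.sum → ∃ i j, IsBox lam i j ∧ T i j = m) ∧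
  (∀ i j i' j', IsBox lam i j → IsBox lam i' j' → T i j = T i' j' → i = i' ∧ j = j')

def HessInvF (lam : List ℕ) (h : ℕ → ℕ) (T : ℕ → ℕ → ℕ) (k ℓ : ℕ) : Prop :=
  ℓ < k ∧ ∃ ik jk il jl : ℕ, IsBox lam ik jk ∧ IsBox lam il jl ∧
    T ik jk = k ∧ T il jl = ℓ ∧
    (jk < jl ∨ (jk = jl ∧ il < ik)) ∧
    (IsBox lam il (jl + 1) → k ≤ h (T il (jl + 1)))

/-- `S` is obtained from `T` by sorting each column increasingly from top to bottom:
same column entries (as sets, entries being distinct), with columns of `S` increasing. -/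
def ColSortedOf (lam : List ℕ) (T S : ℕ → ℕ → ℕ) : Prop :=
  (∀ j m, (∃ i, IsBox lam i j ∧ T i j = m) ↔ (∃ i, IsBox lam i j ∧ S i j = m)) ∧
  (∀ i j, IsBox lam i j → IsBox lam (i+1) j → S i j < S (i+1) j)

def IsPartitionL (lam : List ℕ) : Prop :=
  ∀ i i', i ≤ i' → lam.getD i' 0 ≤ lam.getD i 0

def hessInvCount (lam : List ℕ) (h : ℕ → ℕ) (T : ℕ → ℕ → ℕ) : ℕ :=
  (((Finset.range (lam.sum + 1)) ×ˢ (Finset.range (lam.sum + 1))).filter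
    (fun p => HessInvF lam h T p.1 p.2)).card

def Hspace (n : ℕ) (h : ℕ → ℕ) : Submodule ℂ (Matrix (Fin n) (Fin n) ℂ) :=
  Submodule.span ℂ
    {A | ∃ i j : Fin n, (i : ℕ) + 1 ≤ h ((j : ℕ) + 1) ∧ A = Matrix.single i j (1 : ℂ)}

/-- Left-nested iterated bracket `[f (m), [f (m-1), [⋯ [f 1, f 0]]]]`. -/
def iterBr (n : ℕ) (f : ℕ → Matrix (Fin n) (Fin n) ℂ) : ℕ → Matrix (Fin n) (Fin n) ℂ
  | 0 => f 0
  | (m+1) => f (m+1) * iterBr n f m - iterBr n f m * f (m+1)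

lemma permMat_eq (n : ℕ) (σ : Equiv.Perm (Fin n)) : permMat n σ = (σ⁻¹).permMatrix ℂ := by
  ext a b
  rw [Equiv.Perm.permMatrix, PEquiv.toMatrix_apply, Equiv.toPEquiv_apply]
  simp only [Option.mem_def, Option.some.injEq]
  show (if σ b = a then (1:ℂ) else 0) = _
  by_cases h : σ b = a
  · rw [if_pos h, if_pos (by rw [← h, Equiv.Perm.coe_inv, Equiv.symm_apply_apply])]
  · rw [if_neg h, if_neg (fun hc => h (by rw [← hc]; simp))]

open Fin.NatCast in
lemma vPerm_apply_last (n : ℕ) : ∀ k i', n - i' = k → ∀ hle : i' ≤ n,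
    vPerm n i' (Fin.last n) = ⟨i', by omega⟩ := by
  intro k
  induction k with
  | zero =>
    intro i' hk hle
    have : i' = n := by omega
    subst this
    rw [vPerm, List.Ico.self_empty]
    rfl
  | succ k ih =>
    intro i' hk hle
    have hlt : i' < n := by omega
    rw [vPerm, List.Ico.eq_cons hlt, List.map_cons, List.prod_cons]
    have hrest := ih (i'+1) (by omega) (by omega)
    rw [vPerm] at hrest
    rw [Equiv.Perm.mul_apply, hrest]
    have hb : (⟨i'+1, by omega⟩ : Fin (n+1)) = ((i'+1 : ℕ) : Fin (n+1)) := by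
      apply Fin.ext
      rw [Fin.val_cast_of_lt (by omega)]
    rw [hb, Equiv.swap_apply_right]
    apply Fin.ext
    exact Fin.val_cast_of_lt (by omega)

lemma permMat_det_unit (n : ℕ) (σ : Equiv.Perm (Fin n)) : IsUnit (permMat n σ).det := by
  rw [permMat_eq, Matrix.det_permutation]
  rcases Int.units_eq_one_or (Equiv.Perm.sign σ⁻¹) with h | h <;> simp [h]

lemma upperUnip_det (n : ℕ) (g : Matrix (Fin n) (Fin n) ℂ) (h : IsUpperUnip n g) :
    g.det = 1 := by
  have hb : g.BlockTriangular id := fun a b hab => h.2 a b hab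
  rw [Matrix.det_of_upperTriangular hb]
  simp [h.1]

lemma single_vecMul' (n : ℕ) (i : Fin n) (M : Matrix (Fin n) (Fin n) ℂ) :
    Pi.single i 1 ᵥ* M = M i := by
  funext b; simp [Matrix.vecMul, dotProduct, Pi.single_apply]

/-- if the flag of `u_i v u_0 y` lies in the Springer fiber of `X_λ`, then the
entries `(u_i)_{ij}` vanish unless `j` labels a box at the end of a row of the base filling. -/
theorem stmt15 (n : ℕ) (lam : List ℕ) (hn : lam.sum = n + 1)
    (w v y : Equiv.Perm (Fin (n+1)))
    (hv : v = vPerm n (w (Fin.last n) : ℕ)) (hy : y = v⁻¹ * w)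
    (ui u0 : Matrix (Fin (n+1)) (Fin (n+1)) ℂ)
    (hui : InUi (n+1) (w (Fin.last n)) ui) (hu0 : InU0 n u0)
    (hflag : InHess (n+1) (Xlam (n+1) lam) (fun r => r - 1)
      (matFlag (n+1) (ui * permMat (n+1) v * u0 * permMat (n+1) y))) :
    ∀ j : Fin (n+1), j ≠ w (Fin.last n) → ¬ EndOfRow lam (j : ℕ) →
      ui (w (Fin.last n)) j = 0 := by
  intro j hji hjend
  set i : Fin (n+1) := w (Fin.last n) with hi
  set g := ui * permMat (n+1) v * u0 * permMat (n+1) y with hg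
  -- permutation facts
  have hvlast : v (Fin.last n) = i := by
    rw [hv, vPerm_apply_last n (n - (i : ℕ)) (i : ℕ) rfl (by omega)]
  have hylast : y (Fin.last n) = Fin.last n := by
    rw [hy, Equiv.Perm.mul_apply, ← hi, ← hvlast, Equiv.Perm.coe_inv, Equiv.symm_apply_apply]
  -- the nilpotent part of ui
  set N : Matrix (Fin (n+1)) (Fin (n+1)) ℂ := fun a b => if a = b then 0 else ui a b with hNdef
  have hN : ui = 1 + N := by
    ext a b
    by_cases h : a = b
    · subst h; rw [Matrix.add_apply]; simp [hNdef, Matrix.one_apply, hui.1.1]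
    · rw [Matrix.add_apply]; simp [hNdef, Matrix.one_apply, h]
  have hN2 : N * N = 0 := by
    ext a b
    rw [Matrix.mul_apply]
    apply Finset.sum_eq_zero
    intro c _
    show (if a = c then 0 else ui a c) * (if c = b then 0 else ui c b) = 0
    by_cases hac : a = c
    · rw [if_pos hac, zero_mul]
    · by_cases hcb : c = b
      · rw [if_pos hcb, mul_zero]
      · rw [if_neg hac, if_neg hcb]
        by_cases h1 : ui a c = 0
        · rw [h1, zero_mul]
        · by_cases h2 : ui c b = 0
          · rw [h2, mul_zero]
          · exact absurd ((hui.2 a c hac h1).trans (hui.2 c b hcb h2).symm) hac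
  have huiInv' : (1 - N) * ui = 1 := by
    have : (1 - N) * (1 + N) = 1 - N * N := by noncomm_ring
    rw [hN, this, hN2, sub_zero]
  -- the row vector
  set ρ : Fin (n+1) → ℂ := (1 - N) i with hρ
  have hρg : ρ ᵥ* g = Pi.single (Fin.last n) 1 := by
    have s1 : ρ ᵥ* ui = Pi.single i 1 := by
      rw [hρ, ← single_vecMul' (n+1) i (1 - N), Matrix.vecMul_vecMul, huiInv',
        Matrix.vecMul_one]
    have s2 : (Pi.single i 1 : Fin (n+1) → ℂ) ᵥ* permMat (n+1) v = Pi.single (Fin.last n) 1 := by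
      rw [single_vecMul']
      funext b
      show (if v b = i then (1:ℂ) else 0) = _
      by_cases hb : b = Fin.last n
      · subst hb; rw [if_pos hvlast, Pi.single_eq_same]
      · rw [if_neg (by rw [← hvlast]; exact fun hc => hb (v.injective hc)),
          Pi.single_eq_of_ne hb]
    have s3 : (Pi.single (Fin.last n) 1 : Fin (n+1) → ℂ) ᵥ* u0 = Pi.single (Fin.last n) 1 := by
      rw [single_vecMul']
      funext b
      by_cases hb : b = Fin.last n
      · subst hb; rw [Pi.single_eq_same]; exact hu0.1.1 _
      · rw [Pi.single_eq_of_ne hb]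
        exact hu0.1.2 _ _ (Fin.lt_last_iff_ne_last.mpr hb)
    have s4 : (Pi.single (Fin.last n) 1 : Fin (n+1) → ℂ) ᵥ* permMat (n+1) y
        = Pi.single (Fin.last n) 1 := by
      rw [single_vecMul']
      funext b
      show (if y b = Fin.last n then (1:ℂ) else 0) = _
      by_cases hb : b = Fin.last n
      · subst hb; rw [if_pos hylast, Pi.single_eq_same]
      · rw [if_neg (by rw [← hylast]; exact fun hc => hb (y.injective hc)),
          Pi.single_eq_of_ne hb]
    rw [hg, ← Matrix.vecMul_vecMul, ← Matrix.vecMul_vecMul, ← Matrix.vecMul_vecMul,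
      s1, s2, s3, s4]
  -- invertibility of g
  have hdet : IsUnit g.det := by
    rw [hg, Matrix.det_mul, Matrix.det_mul, Matrix.det_mul,
      upperUnip_det _ _ hui.1, upperUnip_det _ _ hu0.1]
    simpa using ((permMat_det_unit (n+1) v).mul (permMat_det_unit (n+1) y))
  have hcolspan : ∀ x : Fin (n+1) → ℂ, x ∈ matFlag (n+1) g (n+1) := by
    intro x
    have hx : x = g.mulVec (g⁻¹.mulVec x) := by
      rw [Matrix.mulVec_mulVec, Matrix.mul_nonsing_inv g hdet, Matrix.one_mulVec]
    rw [hx]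
    set z := g⁻¹.mulVec x
    have hsum : g.mulVec z = ∑ c : Fin (n+1), z c • (fun a => g a c) := by
      funext a
      rw [Finset.sum_apply]
      simp [Matrix.mulVec, dotProduct, mul_comm]
    rw [hsum]
    exact Submodule.sum_mem _ fun c _ =>
      Submodule.smul_mem _ _ (Submodule.subset_span ⟨c, c.isLt, rfl⟩)
  -- combinatorial part: find the column r of Xlam equal to e_j
  obtain ⟨a, b, hbox, hlab⟩ := baseLabel_surj lam (m := (j:ℕ)+1) (by omega)
    (by rw [hn]; omega)
  have hbox' : IsBox lam a (b+1) := by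
    by_contra hc
    exact hjend ⟨a, b, hbox, hc, hlab⟩
  have hRb := baseLabel_le lam hbox'
  set R := baseLabel lam a (b+1) with hR
  have hRn : R ≤ n + 1 := by rw [← hn]; exact hRb.2
  have hR1 : 1 ≤ R := hRb.1
  set r : Fin (n+1) := ⟨R - 1, by omega⟩ with hr
  have hr1 : (r : ℕ) + 1 = R := by show R - 1 + 1 = R; omega
  have hcol : (Xlam (n+1) lam).mulVec (Pi.single r 1) = Pi.single j 1 := by
    funext ℓ
    have hmv : (Xlam (n+1) lam).mulVec (Pi.single r 1) ℓ = Xlam (n+1) lam ℓ r := by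
      simp [Matrix.mulVec_single]
    rw [hmv]
    by_cases hℓ : ℓ = j
    · subst hℓ
      rw [Pi.single_eq_same, Xlam, if_pos ⟨a, b, hbox', hlab, by rw [← hR]; omega⟩]
    · rw [Pi.single_eq_of_ne hℓ, Xlam, if_neg]
      rintro ⟨i0, j0, hb0, h1, h2⟩
      have heq2 : baseLabel lam i0 (j0+1) = baseLabel lam a (b+1) := by rw [← hR]; omega
      obtain ⟨e1, e2⟩ := baseLabel_inj lam hb0 hbox' heq2
      have hj0 : j0 = b := by omega
      have : (ℓ : ℕ) = (j : ℕ) := by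
        have : baseLabel lam i0 j0 = baseLabel lam a b := by rw [e1, hj0]
        omega
      exact hℓ (Fin.ext this)
  -- e_j lies in the n-th space of the flag
  have hXin : Pi.single j (1:ℂ) ∈ matFlag (n+1) g n := by
    have := hflag (n+1) le_rfl _ (hcolspan (Pi.single r 1))
    rw [hcol] at this
    exact this
  -- the functional x ↦ ρ ⬝ᵥ x kills the n-th space
  let φ : (Fin (n+1) → ℂ) →ₗ[ℂ] ℂ :=
    { toFun := fun x : Fin (n+1) → ℂ => ρ ⬝ᵥ x
      map_add' := fun x y' => by simp
      map_smul' := fun c x => by simp }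
  have hle : matFlag (n+1) g n ≤ LinearMap.ker φ := by
    rw [matFlag, Submodule.span_le]
    rintro x ⟨c, hc, rfl⟩
    simp only [SetLike.mem_coe, LinearMap.mem_ker, φ, LinearMap.coe_mk, AddHom.coe_mk]
    show (ρ ᵥ* g) c = 0
    rw [hρg]
    exact Pi.single_eq_of_ne (fun hc' => by rw [hc'] at hc; simp at hc) 1
  have hφ0 : ρ ⬝ᵥ Pi.single j 1 = 0 := hle hXin
  have hρj : ρ j = 0 := by simpa using hφ0
  have hρj2 : ρ j = - ui i j := by
    rw [hρ]
    show (1 - N) i j = _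
    rw [Matrix.sub_apply, Matrix.one_apply_ne (Ne.symm hji)]
    show (0:ℂ) - (if i = j then 0 else ui i j) = _
    rw [if_neg (fun hc => hji (Fin.ext (congrArg Fin.val hc)).symm), zero_sub]
  rw [hρj2, neg_eq_zero] at hρj
  exact hρj
end
end

section
/- Let λ be a weak composition of n, w ∈ S_n with R(w) row-strict, and V_• = g_n g_{n−1}⋯g_2 wE_• with g_k ∈ B_k(w), so V_• has basis vectors v_r = g_n⋯g_2 e_{w(r)}. If ℓ labels a box of R(w) with r = r_ℓ the box directly to its right, then v_ℓ = X_λ v_r + Σ_{(t,ℓ) ∈ inv_λ(w), ℓ < t ≤ n} x_{w(t)w(ℓ)} v_t, where x_{w(t)w(ℓ)} are the coordinates of g_t. Consequently V_• lies in the Springer fiber of X_λ (i.e., X_λ(V_r) ⊆ V_{r−1} for all r). -/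
open Matrix

attribute [local instance] Classical.propDecidable

noncomputable section

namespace SFA

def colSum (lam : List ℕ) (j : ℕ) : ℕ := ∑ i' ∈ Finset.range lam.length, min (lam.getD i' 0) j

def colCard (lam : List ℕ) (i j : ℕ) : ℕ :=
  ((Finset.Ico i lam.length).filter (fun i' => j < lam.getD i' 0)).card

lemma baseLabel_eq (lam : List ℕ) (i j : ℕ) :
    baseLabel lam i j = colSum lam j + colCard lam i j := rfl

lemma sum_getD (lam : List ℕ) : ∑ i ∈ Finset.range lam.length, lam.getD i 0 = lam.sum := by
  induction lam with
  | nil => simp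
  | cons a t ih =>
      rw [List.length_cons, Finset.sum_range_succ', List.sum_cons]
      simp only [List.getD_cons_succ, List.getD_cons_zero]
      rw [ih]; ring

lemma getD_le_sum (lam : List ℕ) (i : ℕ) : lam.getD i 0 ≤ lam.sum := by
  rcases lt_or_ge i lam.length with h | h
  · rw [← sum_getD]
    exact Finset.single_le_sum (f := fun i' => lam.getD i' 0) (fun _ _ => Nat.zero_le _)
      (Finset.mem_range.2 h)
  · rw [List.getD_eq_default _ _ h]; exact Nat.zero_le _

lemma colSum_mono (lam : List ℕ) {j j' : ℕ} (h : j ≤ j') : colSum lam j ≤ colSum lam j' :=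
  Finset.sum_le_sum fun i _ => min_le_min le_rfl h

lemma colSum_le_sum (lam : List ℕ) (j : ℕ) : colSum lam j ≤ lam.sum := by
  rw [← sum_getD]
  exact Finset.sum_le_sum fun i _ => Nat.min_le_left _ _

lemma colSum_succ (lam : List ℕ) (j : ℕ) :
    colSum lam (j+1) = colSum lam j + colCard lam 0 j := by
  unfold colSum colCard
  rw [← Finset.range_eq_Ico, Finset.card_filter, ← Finset.sum_add_distrib]
  apply Finset.sum_congr rfl
  intro i _
  rcases le_or_gt (lam.getD i 0) j with h | h
  · rw [if_neg (by omega)]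
    omega
  · rw [if_pos h]
    omega

lemma colCard_le (lam : List ℕ) (i j : ℕ) : colCard lam i j ≤ colCard lam 0 j :=
  Finset.card_le_card (Finset.filter_subset_filter _ (Finset.Ico_subset_Ico (Nat.zero_le _) le_rfl))

lemma colCard_pos (lam : List ℕ) {i j : ℕ} (h : IsBox lam i j) : 1 ≤ colCard lam i j := by
  rw [Nat.one_le_iff_ne_zero, ← Nat.pos_iff_ne_zero]
  unfold colCard
  rw [Finset.card_pos]
  exact ⟨i, Finset.mem_filter.2 ⟨Finset.mem_Ico.2 ⟨le_rfl, h.1⟩, h.2⟩⟩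

lemma colCard_anti (lam : List ℕ) {i i' : ℕ} (j : ℕ) (h : i ≤ i') :
    colCard lam i' j ≤ colCard lam i j :=
  Finset.card_le_card (Finset.filter_subset_filter _ (Finset.Ico_subset_Ico h le_rfl))

lemma colCard_lt (lam : List ℕ) {i i' j : ℕ} (hii : i < i') (h : IsBox lam i j) :
    colCard lam i' j < colCard lam i j := by
  have : insert i ((Finset.Ico i' lam.length).filter (fun i'' => j < lam.getD i'' 0)) ⊆
      (Finset.Ico i lam.length).filter (fun i'' => j < lam.getD i'' 0) := by
    intro a ha
    rcases Finset.mem_insert.1 ha with rfl | ha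
    · exact Finset.mem_filter.2 ⟨Finset.mem_Ico.2 ⟨le_rfl, h.1⟩, h.2⟩
    · rcases Finset.mem_filter.1 ha with ⟨hm, hp⟩
      rcases Finset.mem_Ico.1 hm with ⟨h1, h2⟩
      exact Finset.mem_filter.2 ⟨Finset.mem_Ico.2 ⟨le_trans (le_of_lt hii) h1, h2⟩, hp⟩
  have hni : i ∉ (Finset.Ico i' lam.length).filter (fun i'' => j < lam.getD i'' 0) := by
    intro hc
    rcases Finset.mem_Ico.1 (Finset.mem_filter.1 hc).1 with ⟨h1, _⟩
    omega
  calc colCard lam i' j < colCard lam i' j + 1 := Nat.lt_succ_self _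
    _ = (insert i ((Finset.Ico i' lam.length).filter (fun i'' => j < lam.getD i'' 0))).card := by
        rw [Finset.card_insert_of_notMem hni]; unfold colCard; omega
    _ ≤ _ := Finset.card_le_card this

lemma baseLabel_pos (lam : List ℕ) {i j : ℕ} (h : IsBox lam i j) : 1 ≤ baseLabel lam i j := by
  rw [baseLabel_eq]
  have := colCard_pos lam h
  omega

lemma baseLabel_le_colSum (lam : List ℕ) {i j : ℕ} :
    baseLabel lam i j ≤ colSum lam (j+1) := by
  rw [baseLabel_eq, colSum_succ]
  exact Nat.add_le_add le_rfl (colCard_le lam i j)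

lemma baseLabel_le_sum (lam : List ℕ) {i j : ℕ} (h : IsBox lam i j) :
    baseLabel lam i j ≤ lam.sum :=
  le_trans (baseLabel_le_colSum lam) (colSum_le_sum lam _)

lemma baseLabel_lt_of_col_lt (lam : List ℕ) {i j i' j' : ℕ} (h' : IsBox lam i' j')
    (hjj : j < j') : baseLabel lam i j < baseLabel lam i' j' := by
  have h1 : baseLabel lam i j ≤ colSum lam (j+1) := baseLabel_le_colSum lam
  have h2 : colSum lam (j+1) ≤ colSum lam j' := colSum_mono lam hjj
  have h3 := colCard_pos lam h'
  rw [baseLabel_eq lam i' j']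
  omega

lemma baseLabel_inj (lam : List ℕ) {i j i' j' : ℕ} (h : IsBox lam i j) (h' : IsBox lam i' j')
    (he : baseLabel lam i j = baseLabel lam i' j') : i = i' ∧ j = j' := by
  rcases lt_trichotomy j j' with hj | rfl | hj
  · exact absurd he (Nat.ne_of_lt (baseLabel_lt_of_col_lt lam h' hj))
  · refine ⟨?_, rfl⟩
    rcases lt_trichotomy i i' with hi | rfl | hi
    · have := colCard_lt lam hi h
      rw [baseLabel_eq lam i j, baseLabel_eq lam i' j] at he; omega
    · rfl
    · have := colCard_lt lam hi h'
      rw [baseLabel_eq lam i j, baseLabel_eq lam i' j] at he; omega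
  · exact absurd he.symm (Nat.ne_of_lt (baseLabel_lt_of_col_lt lam h hj))

lemma isBox_mono (lam : List ℕ) {i j k : ℕ} (hk : k ≤ j) (h : IsBox lam i j) : IsBox lam i k :=
  ⟨h.1, lt_of_le_of_lt hk h.2⟩

end SFA

namespace SFA

lemma Xlam_apply (n : ℕ) (lam : List ℕ) (a b : Fin n) :
    Xlam n lam a b = if RightNbr lam (a : ℕ) (b : ℕ) then 1 else 0 := rfl

lemma rightNbr_left_unique {lam : List ℕ} {a a' b : ℕ} (h : RightNbr lam a b)
    (h' : RightNbr lam a' b) : a = a' := by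
  obtain ⟨i, j, hb, h1, h2⟩ := h
  obtain ⟨i', j', hb', h1', h2'⟩ := h'
  obtain ⟨hi, hj⟩ := baseLabel_inj lam hb hb' (h2.trans h2'.symm)
  subst hi
  have : j = j' := by omega
  subst this
  omega

lemma rightNbr_right_unique {lam : List ℕ} {a b b' : ℕ} (h : RightNbr lam a b)
    (h' : RightNbr lam a b') : b = b' := by
  obtain ⟨i, j, hb, h1, h2⟩ := h
  obtain ⟨i', j', hb', h1', h2'⟩ := h'
  obtain ⟨hi, hj⟩ := baseLabel_inj lam (isBox_mono lam (Nat.le_succ j) hb)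
    (isBox_mono lam (Nat.le_succ j') hb') (h1.trans h1'.symm)
  subst hi; subst hj
  omega

lemma rightNbr_symm_lt {n : ℕ} {lam : List ℕ} (w : Equiv.Perm (Fin n))
    (hrs : RowStrictT n lam w) {a b : Fin n} (h : RightNbr lam (a : ℕ) (b : ℕ)) :
    w.symm a < w.symm b := by
  obtain ⟨i, j, hb, h1, h2⟩ := h
  refine hrs i j hb (w.symm a) (w.symm b) ?_ ?_
  · rw [Equiv.apply_symm_apply]; omega
  · rw [Equiv.apply_symm_apply]; omega

def Chain (lam : List ℕ) (m : ℕ) (a b : ℕ) : Prop :=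
  if m = 0 then a = b
  else ∃ i j, IsBox lam i (j+m) ∧ baseLabel lam i j = a+1 ∧ baseLabel lam i (j+m) = b+1

lemma chain_zero {lam : List ℕ} {a b : ℕ} : Chain lam 0 a b ↔ a = b := by simp [Chain]

lemma chain_one {lam : List ℕ} {a b : ℕ} : Chain lam 1 a b ↔ RightNbr lam a b := by
  simp [Chain, RightNbr]

lemma chain_succ {n : ℕ} {lam : List ℕ} (hn : lam.sum = n) (m : ℕ) (a b : Fin n) :
    Chain lam (m+1) (a : ℕ) (b : ℕ) ↔
      ∃ c : Fin n, Chain lam m (a : ℕ) (c : ℕ) ∧ RightNbr lam (c : ℕ) (b : ℕ) := by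
  constructor
  · intro h
    rw [Chain, if_neg (Nat.succ_ne_zero m)] at h
    obtain ⟨i, j, hb, h1, h2⟩ := h
    rcases Nat.eq_zero_or_pos m with rfl | hm
    · refine ⟨a, chain_zero.2 rfl, ⟨i, j, ?_, h1, ?_⟩⟩
      · simpa using hb
      · simpa using h2
    · have hbox : IsBox lam i (j+m) := isBox_mono lam (by omega) hb
      have hc1 : 1 ≤ baseLabel lam i (j+m) := baseLabel_pos lam hbox
      have hc2 : baseLabel lam i (j+m) ≤ n := hn ▸ baseLabel_le_sum lam hbox
      refine ⟨⟨baseLabel lam i (j+m) - 1, by omega⟩, ?_, ?_⟩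
      · rw [Chain, if_neg (by omega)]
        exact ⟨i, j, hbox, h1, by simp; omega⟩
      · refine ⟨i, j+m, ?_, by simp; omega, ?_⟩
        · have : j + m + 1 = j + (m+1) := by omega
          rw [this]; exact hb
        · have : j + m + 1 = j + (m+1) := by omega
          rw [this]; exact h2
  · rintro ⟨c, hc, hr⟩
    rcases Nat.eq_zero_or_pos m with rfl | hm
    · have : (a : ℕ) = (c : ℕ) := chain_zero.1 hc
      rw [Chain, if_neg (Nat.one_ne_zero)]
      obtain ⟨i, j, hb, h1, h2⟩ := hr
      exact ⟨i, j, by simpa using hb, by omega, by simpa using h2⟩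
    · rw [Chain, if_neg (by omega)] at hc
      obtain ⟨i, j, hb, h1, h2⟩ := hc
      obtain ⟨i', j', hb', h1', h2'⟩ := hr
      obtain ⟨hi, hj⟩ := baseLabel_inj lam hb (isBox_mono lam (Nat.le_succ j') hb')
        (h2.trans h1'.symm)
      subst hi
      have : j' = j + m := by omega
      subst this
      rw [Chain, if_neg (Nat.succ_ne_zero m)]
      refine ⟨i, j, ?_, h1, ?_⟩
      · have : j + m + 1 = j + (m+1) := by omega
        rw [← this]; exact hb'
      · have : j + m + 1 = j + (m+1) := by omega
        rw [← this]; exact h2'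

lemma chain_symm_le {n : ℕ} {lam : List ℕ} (hn : lam.sum = n) (w : Equiv.Perm (Fin n))
    (hrs : RowStrictT n lam w) :
    ∀ (m : ℕ) (a b : Fin n), Chain lam m (a : ℕ) (b : ℕ) →
      w.symm a ≤ w.symm b ∧ (m ≠ 0 → w.symm a < w.symm b) := by
  intro m
  induction m with
  | zero =>
      intro a b h
      have : a = b := Fin.val_injective (chain_zero.1 h)
      subst this
      exact ⟨le_rfl, fun h0 => absurd rfl h0⟩
  | succ m ih =>
      intro a b h
      obtain ⟨c, hc, hr⟩ := (chain_succ hn m a b).1 h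
      have h1 := (ih a c hc).1
      have h2 := rightNbr_symm_lt w hrs hr
      exact ⟨le_of_lt (lt_of_le_of_lt h1 h2), fun _ => lt_of_le_of_lt h1 h2⟩

lemma Xpow_apply {n : ℕ} {lam : List ℕ} (hn : lam.sum = n) :
    ∀ (m : ℕ) (a b : Fin n),
      (Xlam n lam ^ m) a b = if Chain lam m (a : ℕ) (b : ℕ) then 1 else 0 := by
  intro m
  induction m with
  | zero =>
      intro a b
      rw [pow_zero, Matrix.one_apply]
      refine if_congr ?_ rfl rfl
      exact ⟨fun h => chain_zero.2 (by rw [h]), fun h => Fin.val_injective (chain_zero.1 h)⟩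
  | succ m ih =>
      intro a b
      rw [pow_succ, Matrix.mul_apply]
      by_cases h : Chain lam (m+1) (a : ℕ) (b : ℕ)
      · rw [if_pos h]
        obtain ⟨c, hc, hr⟩ := (chain_succ hn m a b).1 h
        rw [Finset.sum_eq_single c]
        · rw [ih, if_pos hc, Xlam_apply, if_pos hr, one_mul]
        · intro c' _ hne
          rcases Classical.em (Chain lam m (a : ℕ) (c' : ℕ)) with h1 | h1
          · rcases Classical.em (RightNbr lam (c' : ℕ) (b : ℕ)) with h2 | h2
            · exact absurd (Fin.val_injective (rightNbr_left_unique h2 hr)) hne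
            · rw [Xlam_apply, if_neg h2, mul_zero]
          · rw [ih, if_neg h1, zero_mul]
        · intro hu; exact absurd (Finset.mem_univ c) hu
      · rw [if_neg h]
        apply Finset.sum_eq_zero
        intro c _
        rcases Classical.em (Chain lam m (a : ℕ) (c : ℕ)) with h1 | h1
        · rcases Classical.em (RightNbr lam (c : ℕ) (b : ℕ)) with h2 | h2
          · exact absurd ((chain_succ hn m a b).2 ⟨c, h1, h2⟩) h
          · rw [Xlam_apply, if_neg h2, mul_zero]
        · rw [ih, if_neg h1, zero_mul]

lemma Xpow_n_zero {n : ℕ} {lam : List ℕ} (hn : lam.sum = n) : Xlam n lam ^ n = 0 := by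
  ext a b
  rw [Xpow_apply hn, Matrix.zero_apply, if_neg]
  intro h
  have hn0 : n ≠ 0 := fun h0 => (h0 ▸ a).elim0
  rw [Chain, if_neg hn0] at h
  obtain ⟨i, j, hb, _, _⟩ := h
  have := getD_le_sum lam i
  have := hb.2
  omega

lemma chain_col {lam : List ℕ} {m : ℕ} {a b : ℕ} (hm : m ≠ 0)
    (h : Chain lam m a b) {i₀ j₀ : ℕ} (hb : IsBox lam i₀ j₀)
    (hl : baseLabel lam i₀ j₀ = b + 1) : m ≤ j₀ := by
  rw [Chain, if_neg hm] at h
  obtain ⟨i, j, hbox, h1, h2⟩ := h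
  obtain ⟨hi, hj⟩ := baseLabel_inj lam hbox hb (h2.trans (by omega))
  omega

lemma chain_shift {lam : List ℕ} {m : ℕ} {c b' d : ℕ}
    (hr : RightNbr lam c b') (h : Chain lam (m+1) c d) : Chain lam m b' d := by
  obtain ⟨i', j', hb', h1', h2'⟩ := hr
  rw [Chain, if_neg (Nat.succ_ne_zero m)] at h
  obtain ⟨i, j, hb, h1, h2⟩ := h
  obtain ⟨hi, hj⟩ := baseLabel_inj lam (isBox_mono lam (by omega) hb)
    (isBox_mono lam (Nat.le_succ j') hb') (h1.trans h1'.symm)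
  subst hi; subst hj
  rcases Nat.eq_zero_or_pos m with rfl | hm
  · rw [chain_zero]
    have : j + 1 = j + (0+1) := rfl
    rw [this] at h2'
    omega
  · rw [Chain, if_neg (by omega)]
    refine ⟨i, j+1, ?_, h2', ?_⟩
    · have : j + 1 + m = j + (m+1) := by omega
      rw [this]; exact hb
    · have : j + 1 + m = j + (m+1) := by omega
      rw [this]; exact h2

lemma chain_extend {n : ℕ} {lam : List ℕ} (hn : lam.sum = n) {m : ℕ} {b d : Fin n}
    {il jl : ℕ} (hbox : IsBox lam il jl) (hld : baseLabel lam il jl = (d : ℕ) + 1)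
    (hm : m + 1 ≤ jl) (hc : Chain lam m (b : ℕ) (d : ℕ)) :
    ∃ c : Fin n, RightNbr lam (c : ℕ) (b : ℕ) ∧ Chain lam (m+1) (c : ℕ) (d : ℕ) := by
  rcases Nat.eq_zero_or_pos m with rfl | hmpos
  · have hbd : (b : ℕ) = (d : ℕ) := chain_zero.1 hc
    obtain ⟨j₀, hj₀⟩ : ∃ j₀, jl = j₀ + 1 := ⟨jl - 1, by omega⟩
    subst hj₀
    have hbox0 : IsBox lam il j₀ := isBox_mono lam (by omega) hbox
    have hc1 : 1 ≤ baseLabel lam il j₀ := baseLabel_pos lam hbox0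
    have hc2 : baseLabel lam il j₀ ≤ n := hn ▸ baseLabel_le_sum lam hbox0
    refine ⟨⟨baseLabel lam il j₀ - 1, by omega⟩, ?_, ?_⟩
    · exact ⟨il, j₀, hbox, by simp; omega, by omega⟩
    · rw [Chain, if_neg Nat.one_ne_zero]
      exact ⟨il, j₀, by simpa using hbox, by simp; omega, by simpa using hld⟩
  · rw [Chain, if_neg (by omega)] at hc
    obtain ⟨i, j, hb, h1, h2⟩ := hc
    obtain ⟨hi, hj⟩ := baseLabel_inj lam hb hbox (h2.trans (by omega))
    subst hi
    obtain ⟨j₀, hj₀⟩ : ∃ j₀, j = j₀ + 1 := ⟨j - 1, by omega⟩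
    subst hj₀
    have hbox0 : IsBox lam i j₀ := isBox_mono lam (by omega) hb
    have hc1 : 1 ≤ baseLabel lam i j₀ := baseLabel_pos lam hbox0
    have hc2 : baseLabel lam i j₀ ≤ n := hn ▸ baseLabel_le_sum lam hbox0
    refine ⟨⟨baseLabel lam i j₀ - 1, by omega⟩, ?_, ?_⟩
    · refine ⟨i, j₀, isBox_mono lam (by omega) hb, by simp; omega, ?_⟩
      omega
    · rw [Chain, if_neg (Nat.succ_ne_zero m)]
      refine ⟨i, j₀, ?_, by simp; omega, ?_⟩
      · have : j₀ + (m+1) = j₀ + 1 + m := by omega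
        rw [this]; exact hb
      · have : j₀ + (m+1) = j₀ + 1 + m := by omega
        rw [this]; exact h2

end SFA

namespace SFA

lemma sum_mulVec {ι : Type*} {n : ℕ} (s : Finset ι) (B : ι → Matrix (Fin n) (Fin n) ℂ)
    (v : Fin n → ℂ) : (∑ i ∈ s, B i) *ᵥ v = ∑ i ∈ s, (B i) *ᵥ v := by
  ext a
  simp only [Matrix.mulVec, dotProduct, Finset.sum_apply, Matrix.sum_apply,
    Finset.sum_mul]
  rw [Finset.sum_comm]

lemma TmE_apply {n : ℕ} (X : Matrix (Fin n) (Fin n) ℂ) (m : ℕ) (u v a b : Fin n) :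
    ((X^m * Matrix.single u v 1 * Xᵀ^m : Matrix (Fin n) (Fin n) ℂ)) a b = (X^m) a u * (X^m) b v := by
  rw [Matrix.mul_assoc, Matrix.mul_apply, Finset.sum_eq_single u]
  · rw [Matrix.single_mul_apply_same, ← Matrix.transpose_pow,
      Matrix.transpose_apply, one_mul]
  · intro c _ hc
    rw [Matrix.single_mul_apply_of_ne (h := hc), mul_zero]
  · intro h; exact absurd (Finset.mem_univ u) h

lemma clm {n : ℕ} {lam : List ℕ} (hn : lam.sum = n) (w : Equiv.Perm (Fin n))
    (k ℓ' : Fin n) (hinv : SpringerInvT n lam w k ℓ') (m : ℕ) :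
    Xlam n lam ^ (m+1) * Matrix.single (w k) (w ℓ') 1 * (Xlam n lam)ᵀ^(m+1) * Xlam n lam
      = Xlam n lam * (Xlam n lam ^ m * Matrix.single (w k) (w ℓ') 1 * (Xlam n lam)ᵀ^m) := by
  set X := Xlam n lam with hX
  obtain ⟨hlk, ik, jk, il, jl, hbk, hbl, hlabk, hlabl, hcol, hclause⟩ := hinv
  have hjkl : jk ≤ jl := by rcases hcol with h | ⟨h, _⟩ <;> omega
  ext a b
  have e1 : ((X^(m+1) * Matrix.single (w k) (w ℓ') 1 * Xᵀ^(m+1) * X : Matrix (Fin n) (Fin n) ℂ)) a b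
      = (X^(m+1)) a (w k) * ∑ c, (X^(m+1)) c (w ℓ') * X c b := by
    rw [Matrix.mul_apply, Finset.mul_sum]
    exact Finset.sum_congr rfl fun c _ => by rw [TmE_apply]; ring
  have e2 : ((X * (X^m * Matrix.single (w k) (w ℓ') 1 * Xᵀ^m) : Matrix (Fin n) (Fin n) ℂ)) a b
      = (X^(m+1)) a (w k) * (X^m) b (w ℓ') := by
    rw [Matrix.mul_apply]
    have h3 : ∀ c, X a c * ((X^m * Matrix.single (w k) (w ℓ') 1 * Xᵀ^m : Matrix (Fin n) (Fin n) ℂ)) c b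
        = (X a c * (X^m) c (w k)) * (X^m) b (w ℓ') := fun c => by rw [TmE_apply]; ring
    rw [Finset.sum_congr rfl fun c _ => h3 c, ← Finset.sum_mul]
    congr 1
    rw [pow_succ', Matrix.mul_apply]
  rw [e1, e2]
  by_cases h0 : (X^(m+1)) a (w k) = 0
  · rw [h0, zero_mul, zero_mul]
  · congr 1
    -- from h0: chain from a to w k of length m+1, so m+1 ≤ jk ≤ jl
    rw [hX, Xpow_apply hn] at h0
    have hch : Chain lam (m+1) ((a : Fin n) : ℕ) ((w k : Fin n) : ℕ) := by
      by_contra hc; rw [if_neg hc] at h0; exact h0 rfl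
    have hmjk : m + 1 ≤ jk := chain_col (Nat.succ_ne_zero m) hch hbk hlabk
    have hmjl : m + 1 ≤ jl := le_trans hmjk hjkl
    by_cases hC : Chain lam m ((b : Fin n) : ℕ) ((w ℓ' : Fin n) : ℕ)
    · obtain ⟨c₀, hr₀, hc₀⟩ := chain_extend hn hbl hlabl hmjl hC
      rw [hX, Xpow_apply hn, if_pos hC]
      rw [Finset.sum_eq_single c₀]
      · rw [Xpow_apply hn, if_pos hc₀, Xlam_apply, if_pos hr₀, one_mul]
      · intro c _ hne
        rcases Classical.em (RightNbr lam ((c : Fin n) : ℕ) ((b : Fin n) : ℕ)) with h2 | h2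
        · exact absurd (Fin.val_injective (rightNbr_left_unique h2 hr₀)) hne
        · rw [Xlam_apply, if_neg h2, mul_zero]
      · intro hu; exact absurd (Finset.mem_univ c₀) hu
    · rw [hX, Xpow_apply hn, if_neg hC]
      apply Finset.sum_eq_zero
      intro c _
      rcases Classical.em (RightNbr lam ((c : Fin n) : ℕ) ((b : Fin n) : ℕ)) with h2 | h2
      · rcases Classical.em (Chain lam (m+1) ((c : Fin n) : ℕ) ((w ℓ' : Fin n) : ℕ)) with h1 | h1
        · exact absurd (chain_shift h2 h1) hC
        · rw [Xpow_apply hn, if_neg h1, zero_mul]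
      · rw [Xlam_apply, if_neg h2, mul_zero]

lemma key {n : ℕ} {lam : List ℕ} (hn : lam.sum = n) (w : Equiv.Perm (Fin n))
    (x : Fin n → Fin n → ℂ) (k : Fin n) :
    BkMat n lam w k (x k) * Xlam n lam =
      Xlam n lam * BkMat n lam w k (x k) +
        ∑ ℓ' : Fin n, (if SpringerInvT n lam w k ℓ' then
            x k ℓ' • (Matrix.single (w k) (w ℓ') 1 * Xlam n lam) else 0) := by
  have hn0 : 0 < n := k.pos
  unfold BkMat
  rw [add_mul, mul_add, one_mul, mul_one, Finset.sum_mul, Finset.mul_sum, add_assoc,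
    ← Finset.sum_add_distrib]
  congr 1
  apply Finset.sum_congr rfl
  intro ℓ' _
  by_cases hinv : SpringerInvT n lam w k ℓ'
  · simp only [if_pos hinv]
    rw [smul_mul_assoc, Matrix.mul_smul, ← smul_add]
    congr 1
    set E := Matrix.single (w k) (w ℓ') (1:ℂ) with hE
    set X := Xlam n lam with hX
    have hcore : (∑ m ∈ Finset.range n, X^m * E * Xᵀ^m) * X
        = X * (∑ m ∈ Finset.range n, X^m * E * Xᵀ^m) + E * X := by
      obtain ⟨N, hN⟩ : ∃ N, n = N + 1 := ⟨n - 1, by omega⟩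
      have hR : Finset.range n = Finset.range (N+1) := by rw [hN]
      rw [Finset.sum_mul, Finset.mul_sum, hR, Finset.sum_range_succ' (fun m => X^m * E * Xᵀ^m * X) N,
        Finset.sum_range_succ (fun m => X * (X^m * E * Xᵀ^m)) N]
      have hXN : X * (X^N * E * Xᵀ^N) = 0 := by
        rw [← Matrix.mul_assoc, ← Matrix.mul_assoc, ← pow_succ', ← hN, hX, Xpow_n_zero hn,
          Matrix.zero_mul, Matrix.zero_mul]
      rw [hXN, add_zero]
      have : ∀ m ∈ Finset.range N, X^(m+1) * E * Xᵀ^(m+1) * X = X * (X^m * E * Xᵀ^m) :=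
        fun m _ => clm hn w k ℓ' hinv m
      rw [Finset.sum_congr rfl this]
      congr 1
      simp [pow_zero]
    exact hcore
  · simp only [if_neg hinv]
    rw [Matrix.zero_mul, Matrix.mul_zero, add_zero]

end SFA

namespace SFA

lemma mulVec_sum {ι : Type*} {n : ℕ} (s : Finset ι) (M : Matrix (Fin n) (Fin n) ℂ)
    (v : ι → Fin n → ℂ) : M *ᵥ (∑ i ∈ s, v i) = ∑ i ∈ s, M *ᵥ v i := by
  ext a
  simp only [Matrix.mulVec, dotProduct, Finset.sum_apply, Finset.mul_sum]
  exact Finset.sum_comm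

lemma EmulVec {n : ℕ} (u v : Fin n) (q : Fin n → ℂ) :
    Matrix.single u v (1:ℂ) *ᵥ q = Pi.single u (q v) := by
  ext a
  rw [Matrix.single_mulVec, one_mul]
  rcases eq_or_ne a u with rfl | h
  · simp
  · simp [h, Function.update_of_ne h, Pi.single_apply, h]

def Pmat (n : ℕ) (lam : List ℕ) (w : Equiv.Perm (Fin n)) (x : Fin n → Fin n → ℂ) (k : ℕ) :
    Matrix (Fin n) (Fin n) ℂ :=
  ((List.ofFn (fun k : Fin n => BkMat n lam w k (x k))).take k).reverse.prod

lemma Pmat_zero (n : ℕ) (lam : List ℕ) (w : Equiv.Perm (Fin n)) (x : Fin n → Fin n → ℂ) :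
    Pmat n lam w x 0 = 1 := by simp [Pmat]

lemma Pmat_succ (n : ℕ) (lam : List ℕ) (w : Equiv.Perm (Fin n)) (x : Fin n → Fin n → ℂ)
    (k : ℕ) (hk : k < n) :
    Pmat n lam w x (k+1) = BkMat n lam w ⟨k, hk⟩ (x ⟨k, hk⟩) * Pmat n lam w x k := by
  unfold Pmat
  rw [List.take_succ, List.reverse_append, List.prod_append]
  have hlen : k < (List.ofFn (fun k : Fin n => BkMat n lam w k (x k))).length := by
    rw [List.length_ofFn]; exact hk
  have heq : (List.ofFn (fun k : Fin n => BkMat n lam w k (x k)))[k]?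
      = some (BkMat n lam w ⟨k, hk⟩ (x ⟨k, hk⟩)) := by
    rw [List.getElem?_eq_getElem hlen, List.getElem_ofFn]
  rw [heq]
  simp

lemma Pmat_top (n : ℕ) (lam : List ℕ) (w : Equiv.Perm (Fin n)) (x : Fin n → Fin n → ℂ) :
    Pmat n lam w x n = bigB n lam w x := by
  unfold Pmat bigB
  have : (List.ofFn (fun k : Fin n => BkMat n lam w k (x k))).length = n := List.length_ofFn
  rw [List.take_of_length_le (le_of_eq this)]

lemma bk_row {n : ℕ} {lam : List ℕ} (hn : lam.sum = n) (w : Equiv.Perm (Fin n))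
    (hrs : RowStrictT n lam w) (x : Fin n → Fin n → ℂ) (k : Fin n) (s : Fin n)
    (hks : (k:ℕ) < (s:ℕ)) (b : Fin n) :
    BkMat n lam w k (x k) (w s) b = (1 : Matrix (Fin n) (Fin n) ℂ) (w s) b := by
  have hz : ∀ m : ℕ, (Xlam n lam ^ m) (w s) (w k) = 0 := by
    intro m
    rw [Xpow_apply hn, if_neg]
    intro h
    have h2 := (chain_symm_le hn w hrs m (w s) (w k) h).1
    simp only [Equiv.symm_apply_apply] at h2
    have := Fin.le_def.1 h2
    omega
  unfold BkMat
  rw [Matrix.add_apply, Matrix.sum_apply]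
  rw [Finset.sum_eq_zero, add_zero]
  intro ℓ' _
  by_cases hinv : SpringerInvT n lam w k ℓ'
  · rw [if_pos hinv, Matrix.smul_apply, Matrix.sum_apply, Finset.sum_eq_zero, smul_zero]
    intro m _
    rw [TmE_apply, hz, zero_mul]
  · rw [if_neg hinv, Matrix.zero_apply]

lemma bk_col {n : ℕ} {lam : List ℕ} (hn : lam.sum = n) (w : Equiv.Perm (Fin n))
    (hrs : RowStrictT n lam w) (x : Fin n → Fin n → ℂ) (t kk : Fin n)
    (h : (t:ℕ) ≤ (kk:ℕ)) (a : Fin n) :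
    BkMat n lam w t (x t) a (w kk) = (1 : Matrix (Fin n) (Fin n) ℂ) a (w kk) := by
  unfold BkMat
  rw [Matrix.add_apply, Matrix.sum_apply]
  rw [Finset.sum_eq_zero, add_zero]
  intro ℓ' _
  by_cases hinv : SpringerInvT n lam w t ℓ'
  · rw [if_pos hinv, Matrix.smul_apply, Matrix.sum_apply, Finset.sum_eq_zero, smul_zero]
    intro m _
    rw [TmE_apply]
    have hz : (Xlam n lam ^ m) (w kk) (w ℓ') = 0 := by
      rw [Xpow_apply hn, if_neg]
      intro hch
      have h2 := (chain_symm_le hn w hrs m (w kk) (w ℓ') hch).1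
      simp only [Equiv.symm_apply_apply] at h2
      have h3 := Fin.le_def.1 h2
      have h4 := Fin.lt_def.1 hinv.1
      omega
    rw [hz, mul_zero]
  · rw [if_neg hinv, Matrix.zero_apply]

lemma sup {n : ℕ} {lam : List ℕ} (hn : lam.sum = n) (w : Equiv.Perm (Fin n))
    (hrs : RowStrictT n lam w) (x : Fin n → Fin n → ℂ) :
    ∀ (k : ℕ), k ≤ n → ∀ (j s : Fin n), k ≤ (s:ℕ) →
      (Pmat n lam w x k *ᵥ Pi.single (w j) 1) (w s) = if s = j then 1 else 0 := by
  intro k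
  induction k with
  | zero =>
      intro _ j s _
      rw [Pmat_zero, Matrix.one_mulVec, Pi.single_apply]
      exact if_congr ⟨fun h => w.injective h, fun h => h ▸ rfl⟩ rfl rfl
  | succ k ih =>
      intro hk1 j s hs
      have hk : k < n := by omega
      rw [Pmat_succ n lam w x k hk, ← Matrix.mulVec_mulVec]
      have hstep : (BkMat n lam w ⟨k,hk⟩ (x ⟨k,hk⟩) *ᵥ (Pmat n lam w x k *ᵥ Pi.single (w j) 1)) (w s)
          = (Pmat n lam w x k *ᵥ Pi.single (w j) 1) (w s) := by
        have hrow : ∀ b, BkMat n lam w ⟨k,hk⟩ (x ⟨k,hk⟩) (w s) b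
            = (1 : Matrix (Fin n) (Fin n) ℂ) (w s) b :=
          bk_row hn w hrs x ⟨k,hk⟩ s (by simpa using (by omega : k < (s:ℕ))) 
        calc (BkMat n lam w ⟨k,hk⟩ (x ⟨k,hk⟩) *ᵥ (Pmat n lam w x k *ᵥ Pi.single (w j) 1)) (w s)
            = ∑ b, BkMat n lam w ⟨k,hk⟩ (x ⟨k,hk⟩) (w s) b * (Pmat n lam w x k *ᵥ Pi.single (w j) 1) b := rfl
          _ = ∑ b, (1 : Matrix (Fin n) (Fin n) ℂ) (w s) b * (Pmat n lam w x k *ᵥ Pi.single (w j) 1) b :=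
              Finset.sum_congr rfl fun b _ => by rw [hrow b]
          _ = ((1 : Matrix (Fin n) (Fin n) ℂ) *ᵥ (Pmat n lam w x k *ᵥ Pi.single (w j) 1)) (w s) := rfl
          _ = (Pmat n lam w x k *ᵥ Pi.single (w j) 1) (w s) := by rw [Matrix.one_mulVec]
      rw [hstep]
      exact ih (by omega) j s (by omega)

lemma colfix {n : ℕ} {lam : List ℕ} (hn : lam.sum = n) (w : Equiv.Perm (Fin n))
    (hrs : RowStrictT n lam w) (x : Fin n → Fin n → ℂ) (kk : Fin n) :
    ∀ m : ℕ, m ≤ (kk:ℕ)+1 → m ≤ n →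
      Pmat n lam w x m *ᵥ Pi.single (w kk) 1 = Pi.single (w kk) 1 := by
  intro m
  induction m with
  | zero => intro _ _; rw [Pmat_zero, Matrix.one_mulVec]
  | succ m ih =>
      intro h1 h2
      have hm : m < n := by omega
      rw [Pmat_succ n lam w x m hm, ← Matrix.mulVec_mulVec, ih (by omega) (by omega)]
      ext a
      simp only [Matrix.mulVec_single_one, Matrix.col_apply]
      rw [bk_col hn w hrs x ⟨m,hm⟩ kk (by simpa using (by omega : m ≤ (kk:ℕ))) a,
        Matrix.one_apply, Pi.single_apply]

lemma inv_right_gt {n : ℕ} {lam : List ℕ} (w : Equiv.Perm (Fin n)) {k ℓ' : Fin n}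
    (hinv : SpringerInvT n lam w k ℓ') {b : Fin n}
    (hr : RightNbr lam ((w ℓ' : Fin n) : ℕ) ((b : Fin n) : ℕ)) :
    (k : ℕ) < (w.symm b : ℕ) := by
  obtain ⟨hlk, ik, jk, il, jl, hbk, hbl, hlabk, hlabl, hcol, hclause⟩ := hinv
  obtain ⟨i, j, hbox, h1, h2⟩ := hr
  obtain ⟨hi, hj⟩ := baseLabel_inj lam (isBox_mono lam (Nat.le_succ j) hbox) hbl
    (h1.trans hlabl.symm)
  subst hi; subst hj
  have hcl := hclause (w.symm b) hbox (by rw [Equiv.apply_symm_apply]; omega)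
  simp only at hcl
  omega

end SFA

namespace SFA

lemma Xq_coord {n : ℕ} {lam : List ℕ} (hn : lam.sum = n) (w : Equiv.Perm (Fin n))
    (hrs : RowStrictT n lam w) (x : Fin n → Fin n → ℂ) (k : ℕ) (hk : k < n)
    (j : Fin n) {ℓ' : Fin n} (hinv : SpringerInvT n lam w ⟨k, hk⟩ ℓ') :
    (Xlam n lam *ᵥ (Pmat n lam w x k *ᵥ Pi.single (w j) 1)) (w ℓ')
      = if RightNbr lam ((w ℓ' : Fin n) : ℕ) ((w j : Fin n) : ℕ) then 1 else 0 := by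
  have hterm : ∀ b : Fin n, Xlam n lam (w ℓ') b * (Pmat n lam w x k *ᵥ Pi.single (w j) 1) b
      = if RightNbr lam ((w ℓ' : Fin n) : ℕ) ((b : Fin n) : ℕ) ∧ b = w j then 1 else 0 := by
    intro b
    rw [Xlam_apply]
    by_cases hr : RightNbr lam ((w ℓ' : Fin n) : ℕ) ((b : Fin n) : ℕ)
    · have hgt : (k : ℕ) < (w.symm b : ℕ) := inv_right_gt w hinv hr
      have hsup : (Pmat n lam w x k *ᵥ Pi.single (w j) 1) b = if w.symm b = j then 1 else 0 := by
        conv_lhs => rw [show b = w (w.symm b) from (Equiv.apply_symm_apply w b).symm]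
        exact sup hn w hrs x k (by omega) j (w.symm b) (by omega)
      rw [if_pos hr, one_mul, hsup]
      by_cases hbj : w.symm b = j
      · rw [if_pos hbj, if_pos ⟨hr, by rw [← hbj, Equiv.apply_symm_apply]⟩]
      · rw [if_neg hbj, if_neg (fun hc => hbj (by rw [hc.2, Equiv.symm_apply_apply]))]
    · rw [if_neg hr, zero_mul, if_neg (fun hc => hr hc.1)]
  have : (Xlam n lam *ᵥ (Pmat n lam w x k *ᵥ Pi.single (w j) 1)) (w ℓ')
      = ∑ b, Xlam n lam (w ℓ') b * (Pmat n lam w x k *ᵥ Pi.single (w j) 1) b := rfl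
  rw [this, Finset.sum_congr rfl fun b _ => hterm b]
  rw [Finset.sum_eq_single (w j)]
  · by_cases hr : RightNbr lam ((w ℓ' : Fin n) : ℕ) ((w j : Fin n) : ℕ)
    · rw [if_pos ⟨hr, rfl⟩, if_pos hr]
    · rw [if_neg (fun hc => hr hc.1), if_neg hr]
  · intro b _ hne
    rw [if_neg (fun hc => hne hc.2)]
  · intro h; exact absurd (Finset.mem_univ (w j)) h

lemma CmulVec {n : ℕ} {lam : List ℕ} (hn : lam.sum = n) (w : Equiv.Perm (Fin n))
    (hrs : RowStrictT n lam w) (x : Fin n → Fin n → ℂ) (k : ℕ) (hk : k < n) (j : Fin n) :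
    (∑ ℓ' : Fin n, (if SpringerInvT n lam w ⟨k, hk⟩ ℓ' then
        x ⟨k, hk⟩ ℓ' • (Matrix.single (w ⟨k, hk⟩) (w ℓ') 1 * Xlam n lam) else 0))
      *ᵥ (Pmat n lam w x k *ᵥ Pi.single (w j) 1)
    = ∑ ℓ' : Fin n, (if SpringerInvT n lam w ⟨k, hk⟩ ℓ' then
        x ⟨k, hk⟩ ℓ' • (Pi.single (w ⟨k, hk⟩)
          (if RightNbr lam ((w ℓ' : Fin n) : ℕ) ((w j : Fin n) : ℕ) then (1:ℂ) else 0) : Fin n → ℂ) else 0) := by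
  rw [sum_mulVec]
  apply Finset.sum_congr rfl
  intro ℓ' _
  by_cases hinv : SpringerInvT n lam w ⟨k, hk⟩ ℓ'
  · rw [if_pos hinv, if_pos hinv, Matrix.smul_mulVec]
    congr 1
    rw [← Matrix.mulVec_mulVec, EmulVec, Xq_coord hn w hrs x k hk j hinv]
  · rw [if_neg hinv, if_neg hinv, Matrix.zero_mulVec]

lemma splitSum {n : ℕ} (k : ℕ) (hk : k < n) (P : Fin n → Prop) (f : Fin n → (Fin n → ℂ)) :
    (∑ t : Fin n, if P t ∧ (t:ℕ) < k+1 then f t else 0)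
      = (∑ t : Fin n, if P t ∧ (t:ℕ) < k then f t else 0)
        + (if P ⟨k, hk⟩ then f ⟨k, hk⟩ else 0) := by
  have h2 : (if P ⟨k, hk⟩ then f ⟨k, hk⟩ else 0)
      = ∑ t : Fin n, if t = (⟨k, hk⟩ : Fin n) then (if P t then f t else 0) else 0 := by
    rw [Finset.sum_ite_eq' Finset.univ (⟨k, hk⟩ : Fin n) (fun t => if P t then f t else 0),
      if_pos (Finset.mem_univ _)]
  rw [h2, ← Finset.sum_add_distrib]
  apply Finset.sum_congr rfl
  intro t _
  by_cases hP : P t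
  · by_cases hlt : (t:ℕ) < k
    · have h3 : ¬ t = (⟨k, hk⟩ : Fin n) := by
        intro h
        rw [h] at hlt
        exact absurd hlt (by simp)
      rw [if_pos (And.intro hP (show (t:ℕ) < k + 1 by omega)), if_pos (And.intro hP hlt),
        if_neg h3, add_zero]
    · by_cases h3 : t = (⟨k, hk⟩ : Fin n)
      · have htk : (t:ℕ) = k := by rw [h3]
        rw [if_pos (And.intro hP (show (t:ℕ) < k + 1 by omega)),
          if_neg (show ¬(P t ∧ (t:ℕ) < k) from fun hc => hlt hc.2), if_pos h3, if_pos hP,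
          zero_add]
      · have htk : (t:ℕ) ≠ k := fun hc => h3 (Fin.ext hc)
        rw [if_neg (show ¬(P t ∧ (t:ℕ) < k + 1) from fun hc => by omega),
          if_neg (show ¬(P t ∧ (t:ℕ) < k) from fun hc => hlt hc.2), if_neg h3, add_zero]
  · rw [if_neg (show ¬(P t ∧ (t:ℕ) < k + 1) from fun hc => hP hc.1),
      if_neg (show ¬(P t ∧ (t:ℕ) < k) from fun hc => hP hc.1), zero_add]
    by_cases h3 : t = (⟨k, hk⟩ : Fin n)
    · rw [if_pos h3, if_neg hP]
    · rw [if_neg h3]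

lemma main {n : ℕ} {lam : List ℕ} (hn : lam.sum = n) (w : Equiv.Perm (Fin n))
    (hrs : RowStrictT n lam w) (x : Fin n → Fin n → ℂ) (ℓ r : Fin n)
    (hnb : RightNbr lam ((w ℓ : Fin n) : ℕ) ((w r : Fin n) : ℕ)) :
    ∀ k : ℕ, k ≤ n →
      Pmat n lam w x k *ᵥ Pi.single (w ℓ) 1 =
        Xlam n lam *ᵥ (Pmat n lam w x k *ᵥ Pi.single (w r) 1) +
          ∑ t : Fin n, (if SpringerInvT n lam w t ℓ ∧ (t:ℕ) < k then
            x t ℓ • (Pmat n lam w x k *ᵥ Pi.single (w t) 1) else 0) := by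
  intro k
  induction k with
  | zero =>
      intro _
      rw [Pmat_zero]
      simp only [Matrix.one_mulVec]
      rw [Finset.sum_eq_zero (fun t _ => if_neg (fun hc => Nat.not_lt_zero _ hc.2)), add_zero]
      ext a
      simp only [Matrix.mulVec_single_one, Matrix.col_apply]
      rw [Xlam_apply, Pi.single_apply]
      by_cases ha : a = w ℓ
      · rw [if_pos ha, if_pos (by rw [ha]; exact hnb)]
      · rw [if_neg ha, if_neg (fun hcon => ha (Fin.val_injective (rightNbr_left_unique hcon hnb)))]
  | succ k ih =>
      intro hk1
      have hk : k < n := by omega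
      have hIH := ih (by omega)
      -- apply B_k to both sides
      have step1 : Pmat n lam w x (k+1) *ᵥ Pi.single (w ℓ) 1
          = BkMat n lam w ⟨k, hk⟩ (x ⟨k, hk⟩) *ᵥ
              (Xlam n lam *ᵥ (Pmat n lam w x k *ᵥ Pi.single (w r) 1)) +
            ∑ t : Fin n, (if SpringerInvT n lam w t ℓ ∧ (t:ℕ) < k then
              x t ℓ • (Pmat n lam w x (k+1) *ᵥ Pi.single (w t) 1) else 0) := by
        rw [Pmat_succ n lam w x k hk, ← Matrix.mulVec_mulVec, hIH, Matrix.mulVec_add]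
        congr 1
        rw [mulVec_sum]
        apply Finset.sum_congr rfl
        intro t _
        by_cases hc : SpringerInvT n lam w t ℓ ∧ (t:ℕ) < k
        · rw [if_pos hc, if_pos hc, Matrix.mulVec_smul, ← Matrix.mulVec_mulVec]
        · rw [if_neg hc, if_neg hc, Matrix.mulVec_zero]
      -- commute B_k past X
      have step2 : BkMat n lam w ⟨k, hk⟩ (x ⟨k, hk⟩) *ᵥ
            (Xlam n lam *ᵥ (Pmat n lam w x k *ᵥ Pi.single (w r) 1))
          = Xlam n lam *ᵥ (Pmat n lam w x (k+1) *ᵥ Pi.single (w r) 1) +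
            (if SpringerInvT n lam w ⟨k, hk⟩ ℓ then
              x ⟨k, hk⟩ ℓ • (Pmat n lam w x (k+1) *ᵥ Pi.single (w ⟨k, hk⟩) 1) else 0) := by
        rw [Matrix.mulVec_mulVec, key hn w x ⟨k, hk⟩, Matrix.add_mulVec,
          ← Matrix.mulVec_mulVec]
        congr 1
        · rw [Pmat_succ n lam w x k hk, ← Matrix.mulVec_mulVec]
        · rw [CmulVec hn w hrs x k hk r]
          have hcolf : Pmat n lam w x (k+1) *ᵥ Pi.single (w ⟨k, hk⟩) 1
              = Pi.single (w ⟨k, hk⟩) 1 :=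
            colfix hn w hrs x ⟨k, hk⟩ (k+1) (by simp) (by omega)
          rw [hcolf]
          rw [Finset.sum_eq_single ℓ]
          · by_cases hinv : SpringerInvT n lam w ⟨k, hk⟩ ℓ
            · rw [if_pos hinv, if_pos hinv, if_pos hnb]
            · rw [if_neg hinv, if_neg hinv]
          · intro ℓ' _ hne
            by_cases hinv : SpringerInvT n lam w ⟨k, hk⟩ ℓ'
            · rw [if_pos hinv, if_neg, Pi.single_zero, smul_zero]
              intro hcon
              exact hne (w.injective (Fin.val_injective (rightNbr_left_unique hcon hnb)))
            · rw [if_neg hinv]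
          · intro h; exact absurd (Finset.mem_univ ℓ) h
      rw [step1, step2]
      rw [add_assoc]
      congr 1
      rw [splitSum k hk (fun t => SpringerInvT n lam w t ℓ)
        (fun t => x t ℓ • (Pmat n lam w x (k+1) *ᵥ Pi.single (w t) 1))]
      rw [add_comm]

lemma rowstart {n : ℕ} {lam : List ℕ} (hn : lam.sum = n) (w : Equiv.Perm (Fin n))
    (hrs : RowStrictT n lam w) (x : Fin n → Fin n → ℂ) (j : Fin n)
    (hj : ∀ a : Fin n, ¬ RightNbr lam ((a : Fin n) : ℕ) ((w j : Fin n) : ℕ)) :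
    ∀ k : ℕ, k ≤ n → Xlam n lam *ᵥ (Pmat n lam w x k *ᵥ Pi.single (w j) 1) = 0 := by
  intro k
  induction k with
  | zero =>
      intro _
      rw [Pmat_zero, Matrix.one_mulVec]
      ext a
      simp only [Matrix.mulVec_single_one, Matrix.col_apply, Pi.zero_apply]
      rw [Xlam_apply, if_neg (hj a)]
  | succ k ih =>
      intro hk1
      have hk : k < n := by omega
      have hq : Xlam n lam *ᵥ (Pmat n lam w x k *ᵥ Pi.single (w j) 1) = 0 := ih (by omega)
      rw [Pmat_succ n lam w x k hk, ← Matrix.mulVec_mulVec, Matrix.mulVec_mulVec]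
      have hXB : Xlam n lam * BkMat n lam w ⟨k,hk⟩ (x ⟨k,hk⟩)
          = BkMat n lam w ⟨k,hk⟩ (x ⟨k,hk⟩) * Xlam n lam -
            ∑ ℓ' : Fin n, (if SpringerInvT n lam w ⟨k, hk⟩ ℓ' then
              x ⟨k, hk⟩ ℓ' • (Matrix.single (w ⟨k, hk⟩) (w ℓ') 1 * Xlam n lam) else 0) := by
        rw [key hn w x ⟨k,hk⟩, add_sub_cancel_right]
      rw [hXB, Matrix.sub_mulVec, ← Matrix.mulVec_mulVec, hq, Matrix.mulVec_zero, zero_sub,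
        neg_eq_zero, CmulVec hn w hrs x k hk j]
      apply Finset.sum_eq_zero
      intro ℓ' _
      by_cases hinv : SpringerInvT n lam w ⟨k, hk⟩ ℓ'
      · rw [if_pos hinv, if_neg (hj (w ℓ')), Pi.single_zero, smul_zero]
      · rw [if_neg hinv]

end SFA

/-- for `V_• = g_n⋯g_2 wE_•` with `g_k ∈ B_k(w)` and basis vectors
`v_r = g_n⋯g_2 e_{w(r)}`, whenever `r` is the entry directly right of `ℓ` in `R(w)` one has
`v_ℓ = X_λ v_r + Σ_{(t,ℓ) ∈ inv_λ(w)} x_{t,ℓ} v_t`; consequently `V_•` lies in the Springer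
fiber of `X_λ`. -/

theorem stmt16 (n : ℕ) (lam : List ℕ) (hn : lam.sum = n)
    (w : Equiv.Perm (Fin n)) (hrs : RowStrictT n lam w)
    (x : Fin n → Fin n → ℂ)
    (hx : ∀ k ℓ : Fin n, x k ℓ ≠ 0 → SpringerInvT n lam w k ℓ) :
    (∀ ℓ r : Fin n, RightNbr lam (w ℓ : ℕ) (w r : ℕ) →
      (bigB n lam w x).mulVec (Pi.single (w ℓ) 1) =
        (Xlam n lam).mulVec ((bigB n lam w x).mulVec (Pi.single (w r) 1)) +
          ∑ t : Fin n, if SpringerInvT n lam w t ℓ then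
            x t ℓ • (bigB n lam w x).mulVec (Pi.single (w t) 1) else 0) ∧
    InHess n (Xlam n lam) (fun r => r - 1) (matFlag n (bigB n lam w x * permMat n w)) := by
  have hpart1 : ∀ ℓ r : Fin n, RightNbr lam (w ℓ : ℕ) (w r : ℕ) →
      (bigB n lam w x).mulVec (Pi.single (w ℓ) 1) =
        (Xlam n lam).mulVec ((bigB n lam w x).mulVec (Pi.single (w r) 1)) +
          ∑ t : Fin n, if SpringerInvT n lam w t ℓ then
            x t ℓ • (bigB n lam w x).mulVec (Pi.single (w t) 1) else 0 := by
    intro ℓ r hnb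
    have h := SFA.main hn w hrs x ℓ r hnb n le_rfl
    rw [SFA.Pmat_top] at h
    rw [h]
    congr 1
    apply Finset.sum_congr rfl
    intro t _
    have hiff : (SpringerInvT n lam w t ℓ ∧ (t:ℕ) < n) ↔ SpringerInvT n lam w t ℓ :=
      ⟨fun hc => hc.1, fun hc => ⟨hc, t.isLt⟩⟩
    rw [if_congr hiff rfl rfl]
  refine ⟨hpart1, ?_⟩
  intro i hi v hv
  have hcol : ∀ j : Fin n, (fun a => (bigB n lam w x * permMat n w) a j)
      = bigB n lam w x *ᵥ Pi.single (w j) 1 := by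
    intro j
    ext a
    simp only [Matrix.mulVec_single_one, Matrix.col_apply]
    rw [Matrix.mul_apply, Finset.sum_eq_single (w j)]
    · have : permMat n w (w j) j = 1 := by
        unfold permMat
        rw [if_pos rfl]
      rw [this, mul_one]
    · intro b _ hne
      have : permMat n w b j = 0 := by
        unfold permMat
        rw [if_neg (fun hc => hne hc.symm)]
      rw [this, mul_zero]
    · intro h; exact absurd (Finset.mem_univ (w j)) h
  induction hv using Submodule.span_induction with
  | mem c hc =>
      obtain ⟨j, hji, rfl⟩ := hc
      rw [hcol j]
      rcases Classical.em (∃ a : Fin n, RightNbr lam ((a : Fin n) : ℕ) ((w j : Fin n) : ℕ))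
        with ⟨a, ha⟩ | hno
      · -- box of w j has a left neighbour
        have hnb : RightNbr lam ((w (w.symm a) : Fin n) : ℕ) ((w j : Fin n) : ℕ) := by
          rw [Equiv.apply_symm_apply]; exact ha
        set ℓ := w.symm a with hℓ
        have h := hpart1 ℓ j hnb
        have hXv : (Xlam n lam).mulVec (bigB n lam w x *ᵥ Pi.single (w j) 1)
            = (bigB n lam w x).mulVec (Pi.single (w ℓ) 1) -
              ∑ t : Fin n, (if SpringerInvT n lam w t ℓ then
                x t ℓ • (bigB n lam w x).mulVec (Pi.single (w t) 1) else 0) := by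
          rw [eq_sub_iff_add_eq]
          exact h.symm
        rw [hXv]
        have hlj : (ℓ : ℕ) < (j : ℕ) := by
          have := SFA.rightNbr_symm_lt w hrs hnb
          simpa using this
        apply Submodule.sub_mem
        · apply Submodule.subset_span
          exact ⟨ℓ, by show (ℓ:ℕ) < i - 1; omega, (hcol ℓ).symm⟩
        · apply Submodule.sum_mem
          intro t _
          by_cases hinv : SpringerInvT n lam w t ℓ
          · rw [if_pos hinv]
            apply Submodule.smul_mem
            have htj : (t : ℕ) < (j : ℕ) := by
              have := SFA.inv_right_gt w hinv hnb
              simpa using this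
            apply Submodule.subset_span
            exact ⟨t, by show (t:ℕ) < i - 1; omega, (hcol t).symm⟩
          · rw [if_neg hinv]
            exact Submodule.zero_mem _
      · -- box of w j is at the start of its row
        push_neg at hno
        have hz := SFA.rowstart hn w hrs x j hno n le_rfl
        rw [SFA.Pmat_top] at hz
        rw [show (Xlam n lam).mulVec (bigB n lam w x *ᵥ Pi.single (w j) 1) = 0 from hz]
        exact Submodule.zero_mem _
  | zero =>
      rw [Matrix.mulVec_zero]
      exact Submodule.zero_mem _
  | add u v' hu hv' hpu hpv =>
      rw [Matrix.mulVec_add]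
      exact Submodule.add_mem _ hpu hpv
  | smul a u hu hpu =>
      rw [Matrix.mulVec_smul]
      exact Submodule.smul_mem _ _ hpu
end
end

section
/- Let λ be a partition of n and h a Hessenberg function with h(i) < i for all i. If R is an h-strict row-strict tableau of shape λ, then std(R), the standard tableau obtained from R by reordering the entries within each column to increase from top to bottom, is also h-strict. -/
open Matrix

attribute [local instance] Classical.propDecidable

noncomputable section

/-- if `R` is an `h`-strict row-strict tableau of partition shape `λ`, then the
column-sorted tableau `std(R)` is also `h`-strict. -/
theorem stmt17 (lam : List ℕ) (hpart : IsPartitionL lam) (h : ℕ → ℕ)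
    (hmono : ∀ a b, a ≤ b → h a ≤ h b)
    (hlt : ∀ i, 1 ≤ i → i ≤ lam.sum → h i < i)
    (T S : ℕ → ℕ → ℕ) (hgood : GoodFilling lam T)
    (hrsT : RowStrictF lam T) (hhsT : HStrictF lam h T)
    (hsort : ColSortedOf lam T S) :
    HStrictF lam h S := by
  obtain ⟨hsame, hinc⟩ := hsort
  obtain ⟨hrange, hsurj, hinjT⟩ := hgood
  have boxMono : ∀ a b j', a ≤ b → IsBox lam b j' → IsBox lam a j' := by
    intro a b j' hab hb
    exact ⟨lt_of_le_of_lt hab hb.1, lt_of_lt_of_le hb.2 (hpart a b hab)⟩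
  have Sstrict : ∀ j' a b, a < b → IsBox lam b j' → S a j' < S b j' := by
    intro j' a b hab hb
    induction b, hab using Nat.le_induction with
    | base => exact hinc a j' (boxMono a (a+1) j' (Nat.le_succ a) hb) hb
    | succ b hab ih =>
        have hb' : IsBox lam b j' := boxMono b (b+1) j' (Nat.le_succ b) hb
        exact lt_trans (ih hb') (hinc b j' hb' hb)
  have Smono : ∀ j' a b, a ≤ b → IsBox lam b j' → S a j' ≤ S b j' := by
    intro j' a b hab hb
    rcases Nat.lt_or_ge a b with h' | h'
    · exact le_of_lt (Sstrict j' a b h' hb)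
    · have : a = b := le_antisymm hab h'
      simp [this]
  intro i j hbox
  have hboxcol : ∀ i' ≤ i, IsBox lam i' (j+1) := fun i' hi' => boxMono i' i (j+1) hi' hbox
  have hex : ∀ i' : ℕ, i' ≤ i → ∃ r, IsBox lam r (j+1) ∧ T r (j+1) = S i' (j+1) := by
    intro i' hi'
    exact (hsame (j+1) (S i' (j+1))).2 ⟨i', hboxcol i' hi', rfl⟩
  choose! r hrbox hrval using hex
  have hexa : ∀ i' : ℕ, i' ≤ i → ∃ a, IsBox lam a j ∧ S a j = T (r i') j := by
    intro i' hi'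
    refine (hsame j (T (r i') j)).1 ⟨r i', ?_, rfl⟩
    have hb := hrbox i' hi'
    exact ⟨hb.1, Nat.lt_of_succ_lt hb.2⟩
  choose! a habox haval using hexa
  have hvb : ∀ i' ≤ i, T (r i') j ≤ h (S i (j+1)) := by
    intro i' hi'
    have hb1 := hrbox i' hi'
    calc T (r i') j ≤ h (T (r i') (j+1)) := hhsT (r i') j hb1
      _ = h (S i' (j+1)) := by rw [hrval i' hi']
      _ ≤ h (S i (j+1)) := hmono _ _ (Smono (j+1) i' i hi' hbox)
  have hainj : ∀ i1 ≤ i, ∀ i2 ≤ i, a i1 = a i2 → i1 = i2 := by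
    intro i1 h1 i2 h2 heq
    have hv : T (r i1) j = T (r i2) j := by
      rw [← haval i1 h1, ← haval i2 h2, heq]
    have hbx1 : IsBox lam (r i1) j := ⟨(hrbox i1 h1).1, Nat.lt_of_succ_lt (hrbox i1 h1).2⟩
    have hbx2 : IsBox lam (r i2) j := ⟨(hrbox i2 h2).1, Nat.lt_of_succ_lt (hrbox i2 h2).2⟩
    have hr := (hinjT _ _ _ _ hbx1 hbx2 hv).1
    have hS : S i1 (j+1) = S i2 (j+1) := by
      rw [← hrval i1 h1, ← hrval i2 h2, hr]
    by_contra hne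
    rcases Nat.lt_or_ge i1 i2 with hlt | hge
    · exact absurd hS (ne_of_lt (Sstrict (j+1) i1 i2 hlt (hboxcol i2 h2)))
    · have hlt : i2 < i1 := lt_of_le_of_ne hge (fun e => hne e.symm)
      exact absurd hS.symm (ne_of_lt (Sstrict (j+1) i2 i1 hlt (hboxcol i1 h1)))
  have hcard : ((Finset.range (i+1)).image a).card = i + 1 := by
    rw [Finset.card_image_of_injOn, Finset.card_range]
    intro x hx y hy hxy
    exact hainj x (Nat.lt_succ_iff.mp (Finset.mem_range.mp hx)) y
      (Nat.lt_succ_iff.mp (Finset.mem_range.mp hy)) hxy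
  have hbig : ∃ i', i' ≤ i ∧ i ≤ a i' := by
    by_contra hc
    push_neg at hc
    have hsub : (Finset.range (i+1)).image a ⊆ Finset.range i := by
      intro x hx
      obtain ⟨y, hy, rfl⟩ := Finset.mem_image.mp hx
      exact Finset.mem_range.mpr (hc y (Nat.lt_succ_iff.mp (Finset.mem_range.mp hy)))
    have hle := Finset.card_le_card hsub
    rw [hcard, Finset.card_range] at hle
    omega
  obtain ⟨i', hi', hge⟩ := hbig
  calc S i j ≤ S (a i') j := Smono j i (a i') hge (habox i' hi')
    _ = T (r i') j := haval i' hi'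
    _ ≤ h (S i (j+1)) := hvb i' hi'
end
end

section
/- Let λ be a partition of n and h a Hessenberg function with h(i) < i for all i. If R is an h-strict row-strict tableau of shape λ that is not a standard tableau (i.e., some column fails to increase top to bottom), then the number of Hessenberg inversions of R is strictly less than the number of Hessenberg inversions of std(R). In particular, any h-strict tableau with the maximal number of Hessenberg inversions is a standard tableau. -/
open Matrix

attribute [local instance] Classical.propDecidable

noncomputable section

/-! ### Auxiliary machinery for Statement 19 -/

section Aux19

open Finset

/-- Rows of column `j`. -/
def aux19colSet (lam : List ℕ) (j : ℕ) : Finset ℕ :=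
  (Finset.range lam.length).filter (fun i => j < lam.getD i 0)

lemma aux19_mem_colSet {lam : List ℕ} {j i : ℕ} :
    i ∈ aux19colSet lam j ↔ IsBox lam i j := by
  simp [aux19colSet, IsBox]

lemma aux19_box_up {lam : List ℕ} (hpart : IsPartitionL lam) {i i' j : ℕ}
    (hb : IsBox lam i j) (hle : i' ≤ i) : IsBox lam i' j :=
  ⟨lt_of_le_of_lt hle hb.1, lt_of_lt_of_le hb.2 (hpart i' i hle)⟩

lemma aux19_box_left {lam : List ℕ} {i j : ℕ} (hb : IsBox lam i (j+1)) : IsBox lam i j :=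
  ⟨hb.1, lt_trans (Nat.lt_succ_self j) hb.2⟩

lemma aux19_colSet_eq_range {lam : List ℕ} (hpart : IsPartitionL lam) (j : ℕ) :
    aux19colSet lam j = Finset.range ((aux19colSet lam j).card) := by
  have hdc : ∀ a ∈ aux19colSet lam j, ∀ b, b ≤ a → b ∈ aux19colSet lam j := by
    intro a ha b hb
    exact aux19_mem_colSet.mpr (aux19_box_up hpart (aux19_mem_colSet.mp ha) hb)
  ext a
  simp only [Finset.mem_range]
  constructor
  · intro ha
    have hsub : Finset.range (a+1) ⊆ aux19colSet lam j := by
      intro b hb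
      exact hdc a ha b (by simpa using Nat.lt_succ_iff.mp (Finset.mem_range.mp hb))
    have := Finset.card_le_card hsub
    simpa using this
  · intro ha
    by_contra hcon
    have hsub : aux19colSet lam j ⊆ Finset.range a := by
      intro b hb
      simp only [Finset.mem_range]
      by_contra hba
      exact hcon (hdc b hb a (le_of_not_gt hba))
    have := Finset.card_le_card hsub
    simp only [Finset.card_range] at this
    omega

/-- Values of column `j`. -/
def aux19colVals (lam : List ℕ) (T : ℕ → ℕ → ℕ) (j : ℕ) : Finset ℕ :=
  (aux19colSet lam j).image (fun i => T i j)

/-- Cap of the box `(i,j)`: `h` of the right neighbour value, or `n` if at end of row. -/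
def aux19cap (lam : List ℕ) (h : ℕ → ℕ) (T : ℕ → ℕ → ℕ) (i j : ℕ) : ℕ :=
  if IsBox lam i (j+1) then h (T i (j+1)) else lam.sum

def aux19boxes (lam : List ℕ) : Finset (ℕ × ℕ) :=
  (Finset.range lam.length ×ˢ Finset.range (lam.getD 0 0)).filter (fun p => IsBox lam p.1 p.2)

lemma aux19_mem_boxes {lam : List ℕ} (hpart : IsPartitionL lam) {p : ℕ × ℕ} :
    p ∈ aux19boxes lam ↔ IsBox lam p.1 p.2 := by
  simp only [aux19boxes, Finset.mem_filter, Finset.mem_product, Finset.mem_range]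
  exact ⟨fun h => h.2, fun h => ⟨⟨h.1, lt_of_lt_of_le h.2 (hpart 0 p.1 (Nat.zero_le _))⟩, h⟩⟩

/-- Hessenberg inversions as a set of pairs of boxes `(K, L)` (`k`-box, `ℓ`-box). -/
def aux19pairs (lam : List ℕ) (h : ℕ → ℕ) (T : ℕ → ℕ → ℕ) : Finset ((ℕ×ℕ)×(ℕ×ℕ)) :=
  ((aux19boxes lam) ×ˢ (aux19boxes lam)).filter (fun q =>
    T q.2.1 q.2.2 < T q.1.1 q.1.2 ∧
    (q.1.2 < q.2.2 ∨ (q.1.2 = q.2.2 ∧ q.2.1 < q.1.1)) ∧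
    T q.1.1 q.1.2 ≤ aux19cap lam h T q.2.1 q.2.2)

end Aux19
section Aux19b

open Finset

lemma aux19_count_eq (lam : List ℕ) (hpart : IsPartitionL lam) (h : ℕ → ℕ)
    (T : ℕ → ℕ → ℕ) (hg : GoodFilling lam T) :
    hessInvCount lam h T = (aux19pairs lam h T).card := by
  rw [hessInvCount]
  refine (Finset.card_nbij (fun q : (ℕ×ℕ)×(ℕ×ℕ) => (T q.1.1 q.1.2, T q.2.1 q.2.2))
    ?_ ?_ ?_).symm
  · -- maps to
    intro q hq
    simp only [aux19pairs, Finset.mem_coe, Finset.mem_filter, Finset.mem_product] at hq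
    obtain ⟨⟨hK, hL⟩, hlt, hpos, hcap⟩ := hq
    have hKb := (aux19_mem_boxes hpart).mp hK
    have hLb := (aux19_mem_boxes hpart).mp hL
    simp only [Finset.mem_coe, Finset.mem_filter, Finset.mem_product, Finset.mem_range]
    refine ⟨⟨?_, ?_⟩, ?_⟩
    · have := (hg.1 _ _ hKb).2; omega
    · have := (hg.1 _ _ hLb).2; omega
    · refine ⟨hlt, q.1.1, q.1.2, q.2.1, q.2.2, hKb, hLb, rfl, rfl, hpos, ?_⟩
      intro hbr
      rw [aux19cap, if_pos hbr] at hcap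
      exact hcap
  · -- injective
    intro q hq q' hq' heq
    simp only [aux19pairs, Finset.coe_filter, Set.mem_setOf_eq, Finset.mem_product] at hq hq'
    obtain ⟨⟨hK, hL⟩, -⟩ := hq
    obtain ⟨⟨hK', hL'⟩, -⟩ := hq'
    have hKb := (aux19_mem_boxes hpart).mp hK
    have hLb := (aux19_mem_boxes hpart).mp hL
    have hKb' := (aux19_mem_boxes hpart).mp hK'
    have hLb' := (aux19_mem_boxes hpart).mp hL'
    have h1 : T q.1.1 q.1.2 = T q'.1.1 q'.1.2 := congrArg Prod.fst heq
    have h2 : T q.2.1 q.2.2 = T q'.2.1 q'.2.2 := congrArg Prod.snd heq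
    have e1 := hg.2.2 _ _ _ _ hKb hKb' h1
    have e2 := hg.2.2 _ _ _ _ hLb hLb' h2
    have : q.1 = q'.1 := Prod.ext e1.1 e1.2
    have : q.2 = q'.2 := Prod.ext e2.1 e2.2
    exact Prod.ext ‹q.1 = q'.1› this
  · -- surjective
    intro p hp
    simp only [Finset.coe_filter, Set.mem_setOf_eq, Finset.mem_product,
      Finset.mem_range] at hp
    obtain ⟨⟨hk, hl⟩, hlk, ik, jk, il, jl, hKb, hLb, hTk, hTl, hpos, hcap⟩ := hp
    refine ⟨((ik, jk), (il, jl)), ?_, ?_⟩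
    · simp only [Finset.mem_coe, aux19pairs, Finset.mem_filter, Finset.mem_product]
      refine ⟨⟨(aux19_mem_boxes hpart).mpr hKb, (aux19_mem_boxes hpart).mpr hLb⟩,
        ?_, hpos, ?_⟩
      · simp only [hTk, hTl]; exact hlk
      · rw [aux19cap]
        by_cases hbr : IsBox lam il (jl+1)
        · rw [if_pos hbr]; rw [hTk]; exact hcap hbr
        · rw [if_neg hbr]; rw [hTk]; omega
    · simp [hTk, hTl]

lemma aux19_pairs_split (lam : List ℕ) (h : ℕ → ℕ) (T : ℕ → ℕ → ℕ) :
    (aux19pairs lam h T).card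
      = ((aux19pairs lam h T).filter (fun q => q.1.2 < q.2.2)).card
        + ((aux19pairs lam h T).filter (fun q => q.1.2 = q.2.2)).card := by
  rw [← Finset.card_filter_add_card_filter_not
    (p := fun q : (ℕ×ℕ)×(ℕ×ℕ) => q.1.2 < q.2.2)]
  congr 1
  apply congrArg Finset.card
  apply Finset.filter_congr
  intro q hq
  simp only [aux19pairs, Finset.mem_filter, Finset.mem_product] at hq
  obtain ⟨-, -, hpos, -⟩ := hq
  constructor
  · intro hnlt
    rcases hpos with hlt | ⟨heq, -⟩
    · exact absurd hlt hnlt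
    · exact heq
  · intro heq
    omega

end Aux19b
section Aux19c

open Finset

lemma aux19_filter_union_card {α : Type*} (R : Finset α) (p q : α → Prop)
    [DecidablePred p] [DecidablePred q]
    (hdisj : ∀ a ∈ R, ¬(p a ∧ q a)) :
    (R.filter (fun a => p a ∨ q a)).card = (R.filter p).card + (R.filter q).card := by
  rw [Finset.filter_or, Finset.card_union_of_disjoint]
  rw [Finset.disjoint_left]
  intro a h1 h2
  rw [Finset.mem_filter] at h1 h2
  exact hdisj a h1.1 ⟨h1.2, h2.2⟩

lemma aux19_pairfib (R S : Finset ℕ) (P : ℕ → ℕ → Prop) :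
    ((R ×ˢ S).filter (fun q => P q.1 q.2)).card
      = ∑ i ∈ R, (S.filter (fun i' => P i i')).card := by
  classical
  simp only [Finset.card_filter]
  rw [Finset.sum_product]

/-- The master per-column identity. -/
lemma aux19_colid (R : Finset ℕ) (v M : ℕ → ℕ)
    (hinj : ∀ i ∈ R, ∀ i' ∈ R, v i = v i' → i = i')
    (hvM : ∀ i ∈ R, v i ≤ M i) :
    ∑ i ∈ R, (R.filter (fun i'' => v i'' ≤ M i)).card
      = (∑ i ∈ R, (R.filter (fun i' => i < i' ∧ v i < v i' ∧ v i' ≤ M i)).card)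
        + (∑ i ∈ R, (R.filter (fun i' => i' ≤ i)).card)
        + ∑ i ∈ R, (R.filter (fun i' => i' < i ∧ v i < v i' ∧ v i' ≤ M i)).card := by
  classical
  -- both groupings of plain inversions agree
  have h3 : ∑ i ∈ R, (R.filter (fun i' => i < i' ∧ v i' < v i)).card
      = ∑ i ∈ R, (R.filter (fun i' => i' < i ∧ v i < v i')).card := by
    simp only [Finset.card_filter]
    exact Finset.sum_comm
  -- first per-row identity
  have hper : ∀ i ∈ R,
      (R.filter (fun i'' => v i'' ≤ M i)).card
        + (R.filter (fun i' => i' < i ∧ M i < v i')).card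
      = (R.filter (fun i' => i' ≤ i)).card
        + ((R.filter (fun i' => i < i' ∧ v i' < v i)).card
          + (R.filter (fun i' => i < i' ∧ v i < v i' ∧ v i' ≤ M i)).card) := by
    intro i hi
    rw [← aux19_filter_union_card R (fun i'' => v i'' ≤ M i)
      (fun i' => i' < i ∧ M i < v i') (by intro a ha; omega)]
    rw [← aux19_filter_union_card R (fun i' => i < i' ∧ v i' < v i)
      (fun i' => i < i' ∧ v i < v i' ∧ v i' ≤ M i) (by intro a ha; omega)]
    rw [← aux19_filter_union_card R (fun i' => i' ≤ i)
      (fun i' => (i < i' ∧ v i' < v i) ∨ (i < i' ∧ v i < v i' ∧ v i' ≤ M i))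
      (by intro a ha; omega)]
    apply congrArg Finset.card
    apply Finset.filter_congr
    intro i' hi'
    have htri : i' = i ∨ v i' < v i ∨ v i < v i' := by
      rcases lt_trichotomy (v i') (v i) with hc | hc | hc
      · exact Or.inr (Or.inl hc)
      · exact Or.inl (hinj i' hi' i hi hc)
      · exact Or.inr (Or.inr hc)
    have h1 := hvM i hi
    have h2 := hvM i' hi'
    by_cases heq : i' = i
    · subst heq; omega
    · omega
  -- second per-row identity
  have hper2 : ∀ i ∈ R,
      (R.filter (fun i' => i' < i ∧ v i < v i')).card
      = (R.filter (fun i' => i' < i ∧ M i < v i')).card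
        + (R.filter (fun i' => i' < i ∧ v i < v i' ∧ v i' ≤ M i)).card := by
    intro i hi
    rw [← aux19_filter_union_card R (fun i' => i' < i ∧ M i < v i')
      (fun i' => i' < i ∧ v i < v i' ∧ v i' ≤ M i) (by intro a ha; omega)]
    apply congrArg Finset.card
    apply Finset.filter_congr
    intro i' hi'
    have h1 := hvM i hi
    omega
  have hsum1 := Finset.sum_congr rfl hper
  have hsum2 := Finset.sum_congr rfl hper2
  rw [Finset.sum_add_distrib] at hsum1
  rw [Finset.sum_add_distrib, Finset.sum_add_distrib] at hsum1
  rw [Finset.sum_add_distrib] at hsum2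
  omega

end Aux19c
section Aux19d

open Finset

variable {lam : List ℕ} {h : ℕ → ℕ} {T S : ℕ → ℕ → ℕ}

/-- Strict monotonicity of a column-sorted filling along columns. -/
lemma aux19_S_mono (hpart : IsPartitionL lam) (hsort : ColSortedOf lam T S)
    {i i' j : ℕ} (hlt : i' < i) (hb : IsBox lam i j) : S i' j < S i j := by
  induction i with
  | zero => omega
  | succ k ih =>
    have hbk : IsBox lam k j := aux19_box_up hpart hb (Nat.le_succ k)
    have hstep : S k j < S (k+1) j := hsort.2 k j hbk hb
    rcases Nat.lt_succ_iff_lt_or_eq.mp hlt with hlt' | heq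
    · exact lt_trans (ih hlt' hbk) hstep
    · rw [heq]; exact hstep

lemma aux19_S_mono_le (hpart : IsPartitionL lam) (hsort : ColSortedOf lam T S)
    {i i' j : ℕ} (hle : i' ≤ i) (hb : IsBox lam i j) : S i' j ≤ S i j := by
  rcases Nat.lt_or_ge i' i with hlt | hge
  · exact le_of_lt (aux19_S_mono hpart hsort hlt hb)
  · have : i' = i := le_antisymm hle hge
    rw [this]

lemma aux19_colVals_eq (hsort : ColSortedOf lam T S) (j : ℕ) :
    aux19colVals lam T j = aux19colVals lam S j := by
  ext x
  simp only [aux19colVals, Finset.mem_image]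
  constructor
  · rintro ⟨i, hi, rfl⟩
    obtain ⟨i', hb', hv'⟩ := (hsort.1 j (T i j)).mp ⟨i, aux19_mem_colSet.mp hi, rfl⟩
    exact ⟨i', aux19_mem_colSet.mpr hb', hv'⟩
  · rintro ⟨i, hi, rfl⟩
    obtain ⟨i', hb', hv'⟩ := (hsort.1 j (S i j)).mpr ⟨i, aux19_mem_colSet.mp hi, rfl⟩
    exact ⟨i', aux19_mem_colSet.mpr hb', hv'⟩

/-- A column-sorted version of a good filling is good. -/
lemma aux19_S_good (hpart : IsPartitionL lam) (hg : GoodFilling lam T)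
    (hsort : ColSortedOf lam T S) : GoodFilling lam S := by
  refine ⟨?_, ?_, ?_⟩
  · intro i j hb
    obtain ⟨i', hb', hv'⟩ := (hsort.1 j (S i j)).mpr ⟨i, hb, rfl⟩
    rw [← hv']
    exact hg.1 i' j hb'
  · intro m h1 h2
    obtain ⟨i, j, hb, hv⟩ := hg.2.1 m h1 h2
    obtain ⟨i', hb', hv'⟩ := (hsort.1 j m).mp ⟨i, hb, hv⟩
    exact ⟨i', j, hb', hv'⟩
  · intro i j i' j' hb hb' heq
    obtain ⟨a, hba, hva⟩ := (hsort.1 j (S i j)).mpr ⟨i, hb, rfl⟩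
    obtain ⟨a', hba', hva'⟩ := (hsort.1 j' (S i' j')).mpr ⟨i', hb', rfl⟩
    have : T a j = T a' j' := by rw [hva, hva', heq]
    have hjj := (hg.2.2 a j a' j' hba hba' this).2
    subst hjj
    refine ⟨?_, rfl⟩
    rcases lt_trichotomy i i' with hc | hc | hc
    · have := aux19_S_mono hpart hsort hc hb'; omega
    · exact hc
    · have := aux19_S_mono hpart hsort hc hb; omega

/-- The column-sorting lemma: the sorted filling is again `h`-strict. -/
lemma aux19_S_hstrict (hpart : IsPartitionL lam) (hmono : ∀ a b, a ≤ b → h a ≤ h b)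
    (hg : GoodFilling lam T) (hhs : HStrictF lam h T)
    (hsort : ColSortedOf lam T S) : HStrictF lam h S := by
  intro t j hb
  by_contra hcon
  push_neg at hcon
  set b := h (S t (j+1)) with hbdef
  have hbtj : IsBox lam t j := aux19_box_left hb
  -- a map from range (t+1) into the small values of column j
  have key : ∀ t', ∃ i', t' ≤ t → IsBox lam i' (j+1) ∧ T i' (j+1) = S t' (j+1) := by
    intro t'
    by_cases ht' : t' ≤ t
    · obtain ⟨i', hb', hv'⟩ := (hsort.1 (j+1) (S t' (j+1))).mpr
        ⟨t', aux19_box_up hpart hb ht', rfl⟩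
      exact ⟨i', fun _ => ⟨hb', hv'⟩⟩
    · exact ⟨0, fun hh => absurd hh ht'⟩
  choose g hgspec using key
  have hcard1 : (Finset.range (t+1)).card
      ≤ ((aux19colVals lam T j).filter (fun x => x ≤ b)).card := by
    apply Finset.card_le_card_of_injOn (fun t' => T (g t') j)
    · intro t' ht'
      rw [Finset.mem_coe, Finset.mem_range, Nat.lt_succ_iff] at ht'
      obtain ⟨hb', hv'⟩ := hgspec t' ht'
      rw [Finset.mem_coe, Finset.mem_filter]
      constructor
      · exact Finset.mem_image.mpr ⟨g t', aux19_mem_colSet.mpr (aux19_box_left hb'), rfl⟩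
      · calc T (g t') j ≤ h (T (g t') (j+1)) := hhs (g t') j hb'
          _ = h (S t' (j+1)) := by rw [hv']
          _ ≤ h (S t (j+1)) := hmono _ _ (aux19_S_mono_le hpart hsort ht' hb)
    · intro t1 h1 t2 h2 heq
      simp only [Finset.coe_range, Set.mem_Iio] at h1 h2
      rw [Nat.lt_succ_iff] at h1 h2
      obtain ⟨hb1, hv1⟩ := hgspec t1 h1
      obtain ⟨hb2, hv2⟩ := hgspec t2 h2
      have hgg := (hg.2.2 _ _ _ _ (aux19_box_left hb1) (aux19_box_left hb2) heq).1
      have : S t1 (j+1) = S t2 (j+1) := by rw [← hv1, ← hv2, hgg]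
      by_contra hne
      rcases lt_or_gt_of_ne hne with hc | hc
      · have := aux19_S_mono hpart hsort hc (aux19_box_up hpart hb h2); omega
      · have := aux19_S_mono hpart hsort hc (aux19_box_up hpart hb h1); omega
  have hcard2 : ((aux19colVals lam T j).filter (fun x => x ≤ b)).card ≤ t := by
    have hsub : (aux19colVals lam T j).filter (fun x => x ≤ b)
        ⊆ (Finset.range t).image (fun i' => S i' j) := by
      intro x hx
      rw [Finset.mem_filter] at hx
      have hx2 := hx.2
      have : x ∈ aux19colVals lam S j := by rw [← aux19_colVals_eq hsort]; exact hx.1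
      obtain ⟨i', hi', hv'⟩ := Finset.mem_image.mp this
      have hbi' : IsBox lam i' j := aux19_mem_colSet.mp hi'
      have hlt : i' < t := by
        by_contra hge
        have := aux19_S_mono_le hpart hsort (le_of_not_gt hge) hbi'
        omega
      exact Finset.mem_image.mpr ⟨i', Finset.mem_range.mpr hlt, hv'⟩
    calc _ ≤ ((Finset.range t).image (fun i' => S i' j)).card := Finset.card_le_card hsub
      _ ≤ (Finset.range t).card := Finset.card_image_le
      _ = t := Finset.card_range t
  rw [Finset.card_range] at hcard1
  omega

end Aux19d

section Aux19e

open Finset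

/-- Values in boxes strictly left of column `j`. -/
def aux19evals (lam : List ℕ) (T : ℕ → ℕ → ℕ) (j : ℕ) : Finset ℕ :=
  ((aux19boxes lam).filter (fun p => p.2 < j)).image (fun p => T p.1 p.2)

variable {lam : List ℕ} {h : ℕ → ℕ} {T S : ℕ → ℕ → ℕ}

/-- Values in columns strictly left of `j` agree for `T` and `S`. -/
lemma aux19_evals_eq (hpart : IsPartitionL lam) (hsort : ColSortedOf lam T S) (j : ℕ) :
    aux19evals lam T j = aux19evals lam S j := by
  unfold aux19evals
  ext x
  simp only [Finset.mem_image, Finset.mem_filter]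
  constructor
  · rintro ⟨p, ⟨hpb, hpj⟩, rfl⟩
    obtain ⟨i', hb', hv'⟩ := (hsort.1 p.2 (T p.1 p.2)).mp
      ⟨p.1, (aux19_mem_boxes hpart).mp hpb, rfl⟩
    exact ⟨(i', p.2), ⟨(aux19_mem_boxes hpart).mpr hb', hpj⟩, hv'⟩
  · rintro ⟨p, ⟨hpb, hpj⟩, rfl⟩
    obtain ⟨i', hb', hv'⟩ := (hsort.1 p.2 (S p.1 p.2)).mpr
      ⟨p.1, (aux19_mem_boxes hpart).mp hpb, rfl⟩
    exact ⟨(i', p.2), ⟨(aux19_mem_boxes hpart).mpr hb', hpj⟩, hv'⟩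

end Aux19e
section Aux19f

open Finset

variable {lam : List ℕ} {h : ℕ → ℕ} {T S : ℕ → ℕ → ℕ}

lemma aux19_val_le_cap (hg : GoodFilling lam T) (hhs : HStrictF lam h T)
    {i j : ℕ} (hb : IsBox lam i j) : T i j ≤ aux19cap lam h T i j := by
  rw [aux19cap]
  by_cases hbr : IsBox lam i (j+1)
  · rw [if_pos hbr]; exact hhs i j hbr
  · rw [if_neg hbr]; exact (hg.1 i j hb).2

/-- Decomposition of the cross-column inversion count. -/
lemma aux19_cross_decomp (hpart : IsPartitionL lam) (hg : GoodFilling lam T)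
    (hhs : HStrictF lam h T) :
    ((aux19pairs lam h T).filter (fun q => q.1.2 < q.2.2)).card
      + ∑ L ∈ aux19boxes lam,
          ((aux19evals lam T L.2).filter (fun x => x ≤ T L.1 L.2)).card
    = ∑ L ∈ aux19boxes lam,
        ((aux19evals lam T L.2).filter (fun x => x ≤ aux19cap lam h T L.1 L.2)).card := by
  have hstep1 : ((aux19pairs lam h T).filter (fun q => q.1.2 < q.2.2)).card
      = ∑ L ∈ aux19boxes lam, ((aux19evals lam T L.2).filter
          (fun x => T L.1 L.2 < x ∧ x ≤ aux19cap lam h T L.1 L.2)).card := by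
    have hmaps : ∀ q ∈ (aux19pairs lam h T).filter (fun q => q.1.2 < q.2.2),
        q.2 ∈ aux19boxes lam := by
      intro q hq
      simp only [aux19pairs, Finset.mem_filter, Finset.mem_product] at hq
      exact hq.1.1.2
    rw [Finset.card_eq_sum_card_fiberwise (f := Prod.snd) (t := aux19boxes lam) hmaps]
    apply Finset.sum_congr rfl
    intro L hL
    apply Finset.card_nbij (fun q => T q.1.1 q.1.2)
    · intro q hq
      simp only [Finset.mem_coe, Finset.mem_filter, aux19pairs, Finset.mem_product] at hq
      obtain ⟨⟨⟨⟨hK, hL'⟩, hvlt, hpos, hcap⟩, hcross⟩, hfib⟩ := hq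
      rw [Finset.mem_coe, Finset.mem_filter]
      constructor
      · exact Finset.mem_image.mpr ⟨q.1, Finset.mem_filter.mpr ⟨hK, hfib ▸ hcross⟩, rfl⟩
      · rw [← hfib]; exact ⟨hvlt, hcap⟩
    · intro q hq q' hq' heq
      simp only [Finset.coe_filter, Set.mem_setOf_eq, aux19pairs, Finset.mem_filter,
        Finset.mem_product] at hq hq'
      obtain ⟨⟨⟨⟨hK, -⟩, -⟩, -⟩, hfib⟩ := hq
      obtain ⟨⟨⟨⟨hK', -⟩, -⟩, -⟩, hfib'⟩ := hq'
      have e := hg.2.2 _ _ _ _ ((aux19_mem_boxes hpart).mp hK)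
        ((aux19_mem_boxes hpart).mp hK') heq
      exact Prod.ext (Prod.ext e.1 e.2) (hfib.trans hfib'.symm)
    · intro x hx
      simp only [Finset.coe_filter, Set.mem_setOf_eq] at hx
      obtain ⟨hx1, hx2, hx3⟩ := hx
      obtain ⟨p, hp, rfl⟩ := Finset.mem_image.mp hx1
      rw [Finset.mem_filter] at hp
      have hq1 : (p, L) ∈ aux19pairs lam h T :=
        Finset.mem_filter.mpr ⟨Finset.mem_product.mpr ⟨hp.1, hL⟩, hx2, Or.inl hp.2, hx3⟩
      exact ⟨(p, L), Finset.mem_coe.mpr (Finset.mem_filter.mpr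
        ⟨Finset.mem_filter.mpr ⟨hq1, hp.2⟩, rfl⟩), rfl⟩
  rw [hstep1, ← Finset.sum_add_distrib]
  apply Finset.sum_congr rfl
  intro L hL
  have hvc := aux19_val_le_cap hg hhs ((aux19_mem_boxes hpart).mp hL)
  rw [← aux19_filter_union_card (aux19evals lam T L.2)
    (fun x => T L.1 L.2 < x ∧ x ≤ aux19cap lam h T L.1 L.2)
    (fun x => x ≤ T L.1 L.2) (by intro a ha; omega)]
  apply congrArg Finset.card
  apply Finset.filter_congr
  intro x hx
  omega

end Aux19f
section Aux19g

open Finset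

variable {lam : List ℕ} {h : ℕ → ℕ} {T S : ℕ → ℕ → ℕ}

lemma aux19_col_inj (hg : GoodFilling lam T) (j : ℕ) :
    ∀ x ∈ aux19colSet lam j, ∀ y ∈ aux19colSet lam j, T x j = T y j → x = y :=
  fun x hx y hy heq =>
    (hg.2.2 x j y j (aux19_mem_colSet.mp hx) (aux19_mem_colSet.mp hy) heq).1

lemma aux19_sum_boxes (lam : List ℕ) (f : ℕ → ℕ → ℕ) :
    ∑ L ∈ aux19boxes lam, f L.1 L.2
      = ∑ j ∈ Finset.range (lam.getD 0 0), ∑ i ∈ aux19colSet lam j, f i j := by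
  classical
  rw [aux19boxes, Finset.sum_filter, Finset.sum_product]
  rw [Finset.sum_comm]
  apply Finset.sum_congr rfl
  intro j hj
  rw [aux19colSet, Finset.sum_filter]
  apply Finset.sum_congr rfl
  intro i hi
  rw [Finset.mem_range] at hi
  by_cases hp : j < lam.getD i 0
  · rw [if_pos hp, if_pos (show IsBox lam i j from ⟨hi, hp⟩)]
  · rw [if_neg hp, if_neg (show ¬ IsBox lam i j from fun hb => hp hb.2)]

lemma aux19_capsum (hg : GoodFilling lam T) (F : ℕ → ℕ) (j : ℕ) :
    ∑ i ∈ aux19colSet lam j, F (aux19cap lam h T i j)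
      = (∑ x ∈ aux19colVals lam T (j+1), F (h x))
        + ((aux19colSet lam j).card - (aux19colSet lam (j+1)).card) * F (lam.sum) := by
  have hsub : aux19colSet lam (j+1) ⊆ aux19colSet lam j := by
    intro i hi
    exact aux19_mem_colSet.mpr (aux19_box_left (aux19_mem_colSet.mp hi))
  rw [← Finset.sum_sdiff hsub, add_comm]
  congr 1
  · -- boxes with a right neighbour
    have himg : ∑ x ∈ aux19colVals lam T (j+1), F (h x)
        = ∑ i ∈ aux19colSet lam (j+1), F (h (T i (j+1))) :=
      Finset.sum_image (f := fun y => F (h y)) (aux19_col_inj hg (j+1))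
    rw [himg]
    apply Finset.sum_congr rfl
    intro i hi
    rw [aux19cap, if_pos (aux19_mem_colSet.mp hi)]
  · -- boxes at the end of their row
    have hconst : ∀ i ∈ aux19colSet lam j \ aux19colSet lam (j+1),
        F (aux19cap lam h T i j) = F lam.sum := by
      intro i hi
      rw [Finset.mem_sdiff] at hi
      rw [aux19cap, if_neg (fun hb => hi.2 (aux19_mem_colSet.mpr hb))]
    rw [Finset.sum_congr rfl hconst, Finset.sum_const, Finset.card_sdiff_of_subset hsub,
      smul_eq_mul]

lemma aux19_cross_eq (hpart : IsPartitionL lam) (hmono : ∀ a b, a ≤ b → h a ≤ h b)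
    (hg : GoodFilling lam T) (hhs : HStrictF lam h T) (hsort : ColSortedOf lam T S) :
    ((aux19pairs lam h T).filter (fun q => q.1.2 < q.2.2)).card
      = ((aux19pairs lam h S).filter (fun q => q.1.2 < q.2.2)).card := by
  have hgS := aux19_S_good hpart hg hsort
  have hhsS := aux19_S_hstrict hpart hmono hg hhs hsort
  have hT := aux19_cross_decomp hpart hg hhs
  have hS := aux19_cross_decomp hpart hgS hhsS
  have hevals : ∀ j, aux19evals lam S j = aux19evals lam T j :=
    fun j => (aux19_evals_eq hpart hsort j).symm
  simp only [hevals] at hS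
  -- the value sums agree
  have hval : ∑ L ∈ aux19boxes lam,
        ((aux19evals lam T L.2).filter (fun x => x ≤ T L.1 L.2)).card
      = ∑ L ∈ aux19boxes lam,
        ((aux19evals lam T L.2).filter (fun x => x ≤ S L.1 L.2)).card := by
    have emid : ∑ j ∈ Finset.range (lam.getD 0 0), ∑ i ∈ aux19colSet lam j,
          ((aux19evals lam T j).filter (fun x => x ≤ T i j)).card
        = ∑ j ∈ Finset.range (lam.getD 0 0), ∑ i ∈ aux19colSet lam j,
          ((aux19evals lam T j).filter (fun x => x ≤ S i j)).card := by
      apply Finset.sum_congr rfl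
      intro j hj
      have p1 : ∑ i ∈ aux19colSet lam j, ((aux19evals lam T j).filter (fun x => x ≤ T i j)).card
          = ∑ x ∈ aux19colVals lam T j, ((aux19evals lam T j).filter (fun y => y ≤ x)).card :=
        (Finset.sum_image (f := fun y => ((aux19evals lam T j).filter (fun x => x ≤ y)).card)
          (aux19_col_inj hg j)).symm
      have p2 : ∑ i ∈ aux19colSet lam j, ((aux19evals lam T j).filter (fun x => x ≤ S i j)).card
          = ∑ x ∈ aux19colVals lam S j, ((aux19evals lam T j).filter (fun y => y ≤ x)).card :=
        (Finset.sum_image (f := fun y => ((aux19evals lam T j).filter (fun x => x ≤ y)).card)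
          (aux19_col_inj hgS j)).symm
      rw [p1, p2, aux19_colVals_eq hsort j]
    exact (aux19_sum_boxes lam
        (fun i j => ((aux19evals lam T j).filter (fun x => x ≤ T i j)).card)).trans
      (emid.trans (aux19_sum_boxes lam
        (fun i j => ((aux19evals lam T j).filter (fun x => x ≤ S i j)).card)).symm)
  -- the cap sums agree
  have hcap : ∑ L ∈ aux19boxes lam,
        ((aux19evals lam T L.2).filter (fun x => x ≤ aux19cap lam h T L.1 L.2)).card
      = ∑ L ∈ aux19boxes lam,
        ((aux19evals lam T L.2).filter (fun x => x ≤ aux19cap lam h S L.1 L.2)).card := by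
    have emid : ∑ j ∈ Finset.range (lam.getD 0 0), ∑ i ∈ aux19colSet lam j,
          ((aux19evals lam T j).filter (fun x => x ≤ aux19cap lam h T i j)).card
        = ∑ j ∈ Finset.range (lam.getD 0 0), ∑ i ∈ aux19colSet lam j,
          ((aux19evals lam T j).filter (fun x => x ≤ aux19cap lam h S i j)).card := by
      apply Finset.sum_congr rfl
      intro j hj
      rw [aux19_capsum hg (fun y => ((aux19evals lam T j).filter (fun x => x ≤ y)).card) j,
        aux19_capsum hgS (fun y => ((aux19evals lam T j).filter (fun x => x ≤ y)).card) j,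
        aux19_colVals_eq hsort (j+1)]
    exact (aux19_sum_boxes lam
        (fun i j => ((aux19evals lam T j).filter (fun x => x ≤ aux19cap lam h T i j)).card)).trans
      (emid.trans (aux19_sum_boxes lam
        (fun i j => ((aux19evals lam T j).filter (fun x => x ≤ aux19cap lam h S i j)).card)).symm)
  omega

end Aux19g
section Aux19h

open Finset

variable {lam : List ℕ} {h : ℕ → ℕ} {T S : ℕ → ℕ → ℕ}

/-- Same-column inversion count in column `j`. -/
def aux19same (lam : List ℕ) (h : ℕ → ℕ) (T : ℕ → ℕ → ℕ) (j : ℕ) : ℕ :=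
  ∑ i ∈ aux19colSet lam j, ((aux19colSet lam j).filter
    (fun i' => i < i' ∧ T i j < T i' j ∧ T i' j ≤ aux19cap lam h T i j)).card

/-- Deficit count in column `j`. -/
def aux19D (lam : List ℕ) (h : ℕ → ℕ) (T : ℕ → ℕ → ℕ) (j : ℕ) : ℕ :=
  ∑ i ∈ aux19colSet lam j, ((aux19colSet lam j).filter
    (fun i' => i' < i ∧ T i j < T i' j ∧ T i' j ≤ aux19cap lam h T i j)).card

lemma aux19_same_fiber (hpart : IsPartitionL lam) (hg : GoodFilling lam T) :
    ((aux19pairs lam h T).filter (fun q => q.1.2 = q.2.2)).card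
      = ∑ j ∈ Finset.range (lam.getD 0 0), aux19same lam h T j := by
  have hmaps : ∀ q ∈ (aux19pairs lam h T).filter (fun q => q.1.2 = q.2.2),
      q.2.2 ∈ Finset.range (lam.getD 0 0) := by
    intro q hq
    simp only [aux19pairs, Finset.mem_filter, Finset.mem_product] at hq
    have hb := (aux19_mem_boxes hpart).mp hq.1.1.2
    rw [Finset.mem_range]
    exact lt_of_lt_of_le hb.2 (hpart 0 q.2.1 (Nat.zero_le _))
  rw [Finset.card_eq_sum_card_fiberwise (f := fun q : (ℕ×ℕ)×(ℕ×ℕ) => q.2.2)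
    (t := Finset.range (lam.getD 0 0)) hmaps]
  apply Finset.sum_congr rfl
  intro j hj
  have hstep : (((aux19pairs lam h T).filter (fun q => q.1.2 = q.2.2)).filter
        (fun q => q.2.2 = j)).card
      = ((aux19colSet lam j ×ˢ aux19colSet lam j).filter
        (fun p => p.1 < p.2 ∧ T p.1 j < T p.2 j ∧ T p.2 j ≤ aux19cap lam h T p.1 j)).card := by
    apply Finset.card_nbij (fun q => (q.2.1, q.1.1))
    · intro q hq
      simp only [aux19pairs, Finset.mem_coe, Finset.mem_filter, Finset.mem_product] at hq
      obtain ⟨⟨⟨⟨hK, hL⟩, hvlt, hpos, hcap⟩, hcc⟩, hcj⟩ := hq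
      obtain ⟨⟨a, b⟩, ⟨c, d⟩⟩ := q
      simp only at hcc hcj hvlt hcap hpos ⊢
      subst hcj
      subst hcc
      have hKb := (aux19_mem_boxes hpart).mp hK
      have hLb := (aux19_mem_boxes hpart).mp hL
      rw [Finset.mem_coe, Finset.mem_filter, Finset.mem_product]
      refine ⟨⟨aux19_mem_colSet.mpr hLb, aux19_mem_colSet.mpr hKb⟩, ?_, hvlt, hcap⟩
      rcases hpos with hlt | ⟨-, hlt⟩
      · omega
      · exact hlt
    · intro q hq q' hq'  heq
      simp only [Finset.coe_filter, Set.mem_setOf_eq, aux19pairs, Finset.mem_filter,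
        Finset.mem_product] at hq hq'
      obtain ⟨⟨-, hcc⟩, hcj⟩ := hq
      obtain ⟨⟨-, hcc'⟩, hcj'⟩ := hq'
      obtain ⟨⟨a, b⟩, ⟨c, d⟩⟩ := q
      obtain ⟨⟨a', b'⟩, ⟨c', d'⟩⟩ := q'
      simp only at hcc hcj hcc' hcj'
      simp only [Prod.mk.injEq] at heq ⊢
      omega
    · intro p hp
      simp only [Finset.coe_filter, Set.mem_setOf_eq, Finset.mem_product] at hp
      obtain ⟨⟨hp1, hp2⟩, hlt, hvlt, hcap⟩ := hp
      have hq1 : ((p.2, j), (p.1, j)) ∈ aux19pairs lam h T :=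
        Finset.mem_filter.mpr ⟨Finset.mem_product.mpr
          ⟨(aux19_mem_boxes hpart).mpr (aux19_mem_colSet.mp hp2),
           (aux19_mem_boxes hpart).mpr (aux19_mem_colSet.mp hp1)⟩,
          hvlt, Or.inr ⟨rfl, hlt⟩, hcap⟩
      exact ⟨((p.2, j), (p.1, j)), Finset.mem_coe.mpr (Finset.mem_filter.mpr
        ⟨Finset.mem_filter.mpr ⟨hq1, rfl⟩, rfl⟩), rfl⟩
  rw [hstep, aux19same]
  simp only [Finset.card_filter]
  rw [Finset.sum_product]

end Aux19h
section Aux19i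

open Finset

variable {lam : List ℕ} {h : ℕ → ℕ} {T S : ℕ → ℕ → ℕ}

lemma aux19_col_val_le_cap (hg : GoodFilling lam T) (hhs : HStrictF lam h T) (j : ℕ) :
    ∀ i ∈ aux19colSet lam j, T i j ≤ aux19cap lam h T i j :=
  fun i hi => aux19_val_le_cap hg hhs (aux19_mem_colSet.mp hi)

/-- Convert a row-filter count to a value-filter count within a column. -/
lemma aux19_rowcnt (hg : GoodFilling lam T) (j y : ℕ) :
    ((aux19colSet lam j).filter (fun i'' => T i'' j ≤ y)).card
      = ((aux19colVals lam T j).filter (fun x => x ≤ y)).card := by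
  apply Finset.card_nbij (fun i => T i j)
  · intro i hi
    rw [Finset.mem_coe, Finset.mem_filter] at hi ⊢
    exact ⟨Finset.mem_image.mpr ⟨i, hi.1, rfl⟩, hi.2⟩
  · intro i hi i' hi' heq
    simp only [Finset.coe_filter, Set.mem_setOf_eq] at hi hi'
    exact aux19_col_inj hg j i hi.1 i' hi'.1 heq
  · intro x hx
    simp only [Finset.coe_filter, Set.mem_setOf_eq] at hx
    obtain ⟨hx1, hx2⟩ := hx
    obtain ⟨i, hi, rfl⟩ := Finset.mem_image.mp hx1
    exact ⟨i, Finset.mem_coe.mpr (Finset.mem_filter.mpr ⟨hi, hx2⟩), rfl⟩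

/-- The per-column comparison: sorted column has `D` more inversions. -/
lemma aux19_same_compare (hpart : IsPartitionL lam) (hmono : ∀ a b, a ≤ b → h a ≤ h b)
    (hg : GoodFilling lam T) (hhs : HStrictF lam h T) (hsort : ColSortedOf lam T S)
    (j : ℕ) :
    aux19same lam h S j = aux19same lam h T j + aux19D lam h T j := by
  have hgS := aux19_S_good hpart hg hsort
  have hhsS := aux19_S_hstrict hpart hmono hg hhs hsort
  -- column identity for T
  have hidT : ∑ i ∈ aux19colSet lam j, ((aux19colSet lam j).filter
        (fun i'' => T i'' j ≤ aux19cap lam h T i j)).card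
      = aux19same lam h T j
        + (∑ i ∈ aux19colSet lam j, ((aux19colSet lam j).filter (fun i' => i' ≤ i)).card)
        + aux19D lam h T j :=
    aux19_colid (aux19colSet lam j) (fun i => T i j) (fun i => aux19cap lam h T i j)
      (aux19_col_inj hg j) (aux19_col_val_le_cap hg hhs j)
  have hidS : ∑ i ∈ aux19colSet lam j, ((aux19colSet lam j).filter
        (fun i'' => S i'' j ≤ aux19cap lam h S i j)).card
      = aux19same lam h S j
        + (∑ i ∈ aux19colSet lam j, ((aux19colSet lam j).filter (fun i' => i' ≤ i)).card)
        + aux19D lam h S j :=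
    aux19_colid (aux19colSet lam j) (fun i => S i j) (fun i => aux19cap lam h S i j)
      (aux19_col_inj hgS j) (aux19_col_val_le_cap hgS hhsS j)
  -- deficit of the sorted filling vanishes
  have hDS : aux19D lam h S j = 0 := by
    rw [aux19D]
    apply Finset.sum_eq_zero
    intro i hi
    rw [Finset.card_eq_zero]
    apply Finset.filter_false_of_mem
    intro i' hi'
    intro hcon
    have := aux19_S_mono hpart hsort hcon.1 (aux19_mem_colSet.mp hi)
    omega
  -- full sums agree
  have hfull : ∑ i ∈ aux19colSet lam j, ((aux19colSet lam j).filter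
        (fun i'' => T i'' j ≤ aux19cap lam h T i j)).card
      = ∑ i ∈ aux19colSet lam j, ((aux19colSet lam j).filter
        (fun i'' => S i'' j ≤ aux19cap lam h S i j)).card := by
    have c1 : ∀ i ∈ aux19colSet lam j, ((aux19colSet lam j).filter
          (fun i'' => T i'' j ≤ aux19cap lam h T i j)).card
        = ((aux19colVals lam T j).filter (fun x => x ≤ aux19cap lam h T i j)).card :=
      fun i _ => aux19_rowcnt hg j _
    have c2 : ∀ i ∈ aux19colSet lam j, ((aux19colSet lam j).filter
          (fun i'' => S i'' j ≤ aux19cap lam h S i j)).card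
        = ((aux19colVals lam T j).filter (fun x => x ≤ aux19cap lam h S i j)).card := by
      intro i hi
      rw [aux19_rowcnt hgS j, ← aux19_colVals_eq hsort j]
    rw [Finset.sum_congr rfl c1, Finset.sum_congr rfl c2]
    rw [aux19_capsum hg (fun y => ((aux19colVals lam T j).filter (fun x => x ≤ y)).card) j,
      aux19_capsum hgS (fun y => ((aux19colVals lam T j).filter (fun x => x ≤ y)).card) j,
      aux19_colVals_eq hsort (j+1)]
  omega

/-- Finding a deficit pair from a column descent. -/
lemma aux19_descent (hpart : IsPartitionL lam) (hmono : ∀ a b, a ≤ b → h a ≤ h b)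
    (hg : GoodFilling lam T) (hhs : HStrictF lam h T)
    {i j : ℕ} (hb : IsBox lam (i+1) j) (hd : T (i+1) j < T i j) :
    ∃ j', IsBox lam (i+1) j' ∧ T (i+1) j' < T i j'
      ∧ T i j' ≤ aux19cap lam h T (i+1) j' := by
  have main : ∀ d j, lam.getD (i+1) 0 ≤ j + d → IsBox lam (i+1) j → T (i+1) j < T i j →
      ∃ j', IsBox lam (i+1) j' ∧ T (i+1) j' < T i j'
        ∧ T i j' ≤ aux19cap lam h T (i+1) j' := by
    intro d
    induction d with
    | zero =>
      intro j hle hb _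
      exact absurd hb.2 (by omega)
    | succ d ih =>
      intro j hle hb hd
      by_cases hbr : IsBox lam (i+1) (j+1)
      · by_cases hc : T i j ≤ h (T (i+1) (j+1))
        · exact ⟨j, hb, hd, by rw [aux19cap, if_pos hbr]; exact hc⟩
        · push_neg at hc
          have hb2 : IsBox lam i (j+1) := aux19_box_up hpart hbr (Nat.le_succ i)
          have h1 : T i j ≤ h (T i (j+1)) := hhs i j hb2
          have hd2 : T (i+1) (j+1) < T i (j+1) := by
            by_contra hcon
            push_neg at hcon
            have := hmono _ _ hcon
            omega
          exact ih (j+1) (by omega) hbr hd2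
      · refine ⟨j, hb, hd, ?_⟩
        rw [aux19cap, if_neg hbr]
        exact (hg.1 i j (aux19_box_up hpart hb (Nat.le_succ i))).2
  exact main (lam.getD (i+1) 0) j (by omega) hb hd

lemma aux19_D_pos (hpart : IsPartitionL lam) (hmono : ∀ a b, a ≤ b → h a ≤ h b)
    (hg : GoodFilling lam T) (hhs : HStrictF lam h T)
    (hnotstd : ∃ i j, IsBox lam (i+1) j ∧ T (i+1) j < T i j) :
    ∃ j' ∈ Finset.range (lam.getD 0 0), 1 ≤ aux19D lam h T j' := by
  obtain ⟨i, j, hb, hd⟩ := hnotstd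
  obtain ⟨j', hb', hd', hcap'⟩ := aux19_descent hpart hmono hg hhs hb hd
  refine ⟨j', ?_, ?_⟩
  · rw [Finset.mem_range]
    exact lt_of_lt_of_le hb'.2 (hpart 0 (i+1) (Nat.zero_le _))
  · rw [aux19D]
    have hmem : (i+1) ∈ aux19colSet lam j' := aux19_mem_colSet.mpr hb'
    have hsummand : 1 ≤ ((aux19colSet lam j').filter
        (fun i' => i' < i+1 ∧ T (i+1) j' < T i' j' ∧ T i' j' ≤ aux19cap lam h T (i+1) j')).card := by
      rw [Nat.succ_le_iff, Finset.card_pos]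
      exact ⟨i, Finset.mem_filter.mpr
        ⟨aux19_mem_colSet.mpr (aux19_box_up hpart hb' (Nat.le_succ i)),
         Nat.lt_succ_self i, hd', hcap'⟩⟩
    calc 1 ≤ _ := hsummand
      _ ≤ _ := Finset.single_le_sum (f := fun i => ((aux19colSet lam j').filter
          (fun i' => i' < i ∧ T i j' < T i' j' ∧ T i' j' ≤ aux19cap lam h T i j')).card)
          (fun _ _ => Nat.zero_le _) hmem

end Aux19i
section Aux19j

open Finset

variable {lam : List ℕ} {h : ℕ → ℕ} {T S : ℕ → ℕ → ℕ}

lemma aux19_S_rowstrict (hpart : IsPartitionL lam) (hmono : ∀ a b, a ≤ b → h a ≤ h b)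
    (hlt : ∀ i, 1 ≤ i → i ≤ lam.sum → h i < i)
    (hg : GoodFilling lam T) (hhs : HStrictF lam h T)
    (hsort : ColSortedOf lam T S) : RowStrictF lam S := by
  intro i j hb
  have hgS := aux19_S_good hpart hg hsort
  have h1 := aux19_S_hstrict hpart hmono hg hhs hsort i j hb
  have h2 := hgS.1 i (j+1) hb
  have := hlt (S i (j+1)) h2.1 h2.2
  omega

/-- The main comparison lemma. -/
lemma aux19_main (hpart : IsPartitionL lam) (hmono : ∀ a b, a ≤ b → h a ≤ h b)
    (hg : GoodFilling lam T) (hhs : HStrictF lam h T) (hsort : ColSortedOf lam T S)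
    (hnotstd : ∃ i j, IsBox lam (i+1) j ∧ T (i+1) j < T i j) :
    hessInvCount lam h T < hessInvCount lam h S := by
  have hgS := aux19_S_good hpart hg hsort
  rw [aux19_count_eq lam hpart h T hg, aux19_count_eq lam hpart h S hgS]
  rw [aux19_pairs_split lam h T, aux19_pairs_split lam h S]
  have hcross := aux19_cross_eq hpart hmono hg hhs hsort
  have hsameT := aux19_same_fiber (h := h) hpart hg
  have hsameS := aux19_same_fiber (h := h) hpart hgS
  have hcmp : ∀ j ∈ Finset.range (lam.getD 0 0),
      aux19same lam h S j = aux19same lam h T j + aux19D lam h T j :=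
    fun j _ => aux19_same_compare hpart hmono hg hhs hsort j
  have hsum : ∑ j ∈ Finset.range (lam.getD 0 0), aux19same lam h S j
      = (∑ j ∈ Finset.range (lam.getD 0 0), aux19same lam h T j)
        + ∑ j ∈ Finset.range (lam.getD 0 0), aux19D lam h T j := by
    rw [Finset.sum_congr rfl hcmp, Finset.sum_add_distrib]
  obtain ⟨j0, hj0, hD⟩ := aux19_D_pos hpart hmono hg hhs hnotstd
  have hDsum : 1 ≤ ∑ j ∈ Finset.range (lam.getD 0 0), aux19D lam h T j :=
    le_trans hD (Finset.single_le_sum (fun _ _ => Nat.zero_le _) hj0)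
  omega

/-- The explicit column-sorted filling. -/
def aux19sorted (lam : List ℕ) (T : ℕ → ℕ → ℕ) (i j : ℕ) : ℕ :=
  ((aux19colVals lam T j).sort (· ≤ ·)).getD i 0

lemma aux19_card_colVals (hg : GoodFilling lam T) (j : ℕ) :
    (aux19colVals lam T j).card = (aux19colSet lam j).card :=
  Finset.card_image_of_injOn (fun x hx y hy heq =>
    aux19_col_inj hg j x (Finset.mem_coe.mp hx) y (Finset.mem_coe.mp hy) heq)

lemma aux19_mem_colSet_card (hpart : IsPartitionL lam) {i j : ℕ} :
    i ∈ aux19colSet lam j ↔ i < (aux19colSet lam j).card := by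
  conv_lhs => rw [aux19_colSet_eq_range hpart j]
  exact Finset.mem_range

lemma aux19_sorted_colSorted (hpart : IsPartitionL lam) (hg : GoodFilling lam T) :
    ColSortedOf lam T (aux19sorted lam T) := by
  constructor
  · intro j m
    constructor
    · rintro ⟨i, hb, rfl⟩
      have hmem : T i j ∈ (aux19colVals lam T j).sort (· ≤ ·) :=
        (Finset.mem_sort (· ≤ ·)).mpr
          (Finset.mem_image.mpr ⟨i, aux19_mem_colSet.mpr hb, rfl⟩)
      obtain ⟨⟨k, hk⟩, hget⟩ := List.mem_iff_get.mp hmem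
      have hklen : k < (aux19colVals lam T j).card := by
        rw [← Finset.length_sort (· ≤ ·)]; exact hk
      refine ⟨k, ?_, ?_⟩
      · apply aux19_mem_colSet.mp
        rw [aux19_mem_colSet_card hpart, ← aux19_card_colVals hg j]
        exact hklen
      · rw [aux19sorted, List.getD_eq_getElem _ _ hk]
        exact hget
    · rintro ⟨i, hb, rfl⟩
      have hlen : i < ((aux19colVals lam T j).sort (· ≤ ·)).length := by
        rw [Finset.length_sort, aux19_card_colVals hg j]
        exact (aux19_mem_colSet_card hpart).mp (aux19_mem_colSet.mpr hb)
      have hmem : aux19sorted lam T i j ∈ (aux19colVals lam T j).sort (· ≤ ·) := by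
        rw [aux19sorted, List.getD_eq_getElem _ _ hlen]
        exact List.getElem_mem hlen
      have : aux19sorted lam T i j ∈ aux19colVals lam T j :=
        (Finset.mem_sort (· ≤ ·)).mp hmem
      obtain ⟨i', hi', hv'⟩ := Finset.mem_image.mp this
      exact ⟨i', aux19_mem_colSet.mp hi', hv'⟩
  · intro i j hb hb1
    have hlen1 : i + 1 < ((aux19colVals lam T j).sort (· ≤ ·)).length := by
      rw [Finset.length_sort, aux19_card_colVals hg j]
      exact (aux19_mem_colSet_card hpart).mp (aux19_mem_colSet.mpr hb1)
    have hlen0 : i < ((aux19colVals lam T j).sort (· ≤ ·)).length := by omega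
    rw [aux19sorted, aux19sorted, List.getD_eq_getElem _ _ hlen0,
      List.getD_eq_getElem _ _ hlen1]
    have := ((Finset.sortedLT_sort (aux19colVals lam T j)).getElem_lt_getElem_iff
      (hi := hlen0) (hj := hlen1)).mpr (by omega)
    simpa [List.get_eq_getElem] using this

end Aux19j
/-- if `R` is `h`-strict row-strict but not standard, then `R` has strictly fewer
Hessenberg inversions than `std(R)`; in particular any `h`-strict tableau with the maximal
number of Hessenberg inversions is standard (columns increase top to bottom). -/
theorem stmt19 (lam : List ℕ) (hpart : IsPartitionL lam) (h : ℕ → ℕ)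
    (hmono : ∀ a b, a ≤ b → h a ≤ h b)
    (hlt : ∀ i, 1 ≤ i → i ≤ lam.sum → h i < i)
    (T S : ℕ → ℕ → ℕ) (hgoodT : GoodFilling lam T)
    (hrsT : RowStrictF lam T) (hhsT : HStrictF lam h T)
    (hsort : ColSortedOf lam T S)
    (hnotstd : ∃ i j, IsBox lam (i+1) j ∧ T (i+1) j < T i j) :
    hessInvCount lam h T < hessInvCount lam h S ∧
    (∀ T', GoodFilling lam T' → RowStrictF lam T' → HStrictF lam h T' →
      (∀ T'', GoodFilling lam T'' → RowStrictF lam T'' → HStrictF lam h T'' →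
        hessInvCount lam h T'' ≤ hessInvCount lam h T') →
      ∀ i j, IsBox lam i j → IsBox lam (i+1) j → T' i j < T' (i+1) j) := by
  constructor
  · exact aux19_main hpart hmono hgoodT hhsT hsort hnotstd
  · intro T' hgood' hrs' hhs' hmax i j hb hb1
    by_contra hcon
    push_neg at hcon
    have hne : T' (i+1) j ≠ T' i j := by
      intro heq
      have := hgood'.2.2 (i+1) j i j hb1 hb heq
      omega
    have hd : T' (i+1) j < T' i j := lt_of_le_of_ne hcon hne
    have hsort' := aux19_sorted_colSorted hpart hgood' (T := T')
    have hlt' := aux19_main hpart hmono hgood' hhs' hsort' ⟨i, j, hb1, hd⟩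
    have hle := hmax (aux19sorted lam T') (aux19_S_good hpart hgood' hsort')
      (aux19_S_rowstrict hpart hmono hlt hgood' hhs' hsort')
      (aux19_S_hstrict hpart hmono hgood' hhs' hsort')
    omega
end
end
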